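/- arXiv:1506.01345 — 3 statements merged into one kernel-verified Lean document; each statement's English description precedes it below -/
import Mathlib

section
/- The map A from NC(n) to NCP(2n) defined by the doubling construction (where the permutation P_{A(π)} satisfies P_{A(π)}(2i) = 2P_π(i) − 1 and P_{A(π)}(2i−1) = 2P_π^{-1}(i) for 1 ≤ i ≤ n) is a bijection from the set of non-crossing partitions of {1,...,n} onto the set of non-crossing pairings of {1,...,2n}. -/
open scoped Classical

/-- A setoid (partition) of `Fin n` is non-crossing if there is no crossing
`a < b < c < d` with `a ∼ c`, `b ∼ d` but `a` and `b` in distinct blocks. -/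
def IsNC {n : ℕ} (S : Setoid (Fin n)) : Prop :=
  ∀ a b c d : Fin n, a < b → b < c → c < d → S.r a c → S.r b d → S.r a b

/-- A partition is a pairing if every block has exactly two elements. -/
def IsPairing {m : ℕ} (T : Setoid (Fin m)) : Prop :=
  ∀ x : Fin m, ∃ y : Fin m, y ≠ x ∧ T.r x y ∧ ∀ z : Fin m, T.r x z → z = x ∨ z = y

/-- The block of `i` in the partition `S`, as a finset. -/
noncomputable def blockOf {n : ℕ} (S : Setoid (Fin n)) (i : Fin n) : Finset (Fin n) :=
  Finset.univ.filter (fun j => S.r i j)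

lemma blockOf_nonempty {n : ℕ} (S : Setoid (Fin n)) (i : Fin n) :
    (blockOf S i).Nonempty :=
  ⟨i, by simp [blockOf, S.iseqv.refl i]⟩

/-- The permutation `P_S` which performs an increasing cycle on every block of `S`:
it sends `i` to the next larger element of its block, or to the minimum of the
block if `i` is the largest element of its block. -/
noncomputable def nextP {n : ℕ} (S : Setoid (Fin n)) (i : Fin n) : Fin n :=
  if h : ((blockOf S i).filter (fun j => i < j)).Nonempty
  then ((blockOf S i).filter (fun j => i < j)).min' h
  else (blockOf S i).min' (blockOf_nonempty S i)

/-- The inverse permutation `P_S⁻¹` (decreasing cycle on every block of `S`). -/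
noncomputable def prevP {n : ℕ} (S : Setoid (Fin n)) (i : Fin n) : Fin n :=
  if h : ((blockOf S i).filter (fun j => j < i)).Nonempty
  then ((blockOf S i).filter (fun j => j < i)).max' h
  else (blockOf S i).max' (blockOf_nonempty S i)

/-- `0`-indexed version of the point `2i-1` of `{1,…,2n}`. -/
def dEven {n : ℕ} (j : Fin n) : Fin (2*n) := ⟨2*j.val, by have := j.isLt; omega⟩

/-- `0`-indexed version of the point `2i` of `{1,…,2n}`. -/
def dOdd {n : ℕ} (j : Fin n) : Fin (2*n) := ⟨2*j.val+1, by have := j.isLt; omega⟩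

/-- The doubling construction `π ↦ A(π)`: the pairing of `{1,…,2n}` generated by
pairing each point `2i` with `2P_π(i) - 1`, so that the associated permutation
satisfies `P_{A(π)}(2i) = 2P_π(i) - 1` and `P_{A(π)}(2i-1) = 2P_π⁻¹(i)`. -/
noncomputable def archSetoid {n : ℕ} (S : Setoid (Fin n)) : Setoid (Fin (2*n)) :=
  Relation.EqvGen.setoid (fun a b => ∃ j : Fin n, a = dOdd j ∧ b = dEven (nextP S j))

/-- The meandric system permutation `M_{π,ρ} ∈ S_{2n}`, defined by
`M_{π,ρ}(2i-1) = 2P_π⁻¹(i)` and `M_{π,ρ}(2i) = 2P_ρ(i) - 1` (here `0`-indexed). -/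
noncomputable def meanderMap {n : ℕ} (π ρ : Setoid (Fin n)) (x : Fin (2*n)) : Fin (2*n) :=
  if x.val % 2 = 0
  then dOdd (prevP π ⟨x.val / 2, by have := x.isLt; omega⟩)
  else dEven (nextP ρ ⟨x.val / 2, by have := x.isLt; omega⟩)

/-- The orbit partition of a map. -/
def orbitSetoid {m : ℕ} (f : Fin m → Fin m) : Setoid (Fin m) :=
  Relation.EqvGen.setoid (fun a b => f a = b)

/-- Number of orbits of a map. -/
noncomputable def numOrbits {m : ℕ} (f : Fin m → Fin m) : ℕ :=
  Nat.card (Quotient (orbitSetoid f))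

/-- `S` is a union of blocks of the partition `T`. -/
def IsBlockUnion {m : ℕ} (T : Setoid (Fin m)) (S : Set (Fin m)) : Prop :=
  ∀ x ∈ S, ∀ y, T.r x y → y ∈ S

/-- `S` is invariant under `f`. -/
def MInvariant {m : ℕ} (f : Fin m → Fin m) (S : Set (Fin m)) : Prop :=
  ∀ x ∈ S, f x ∈ S

/-- The meandric system `M_{π,ρ}` is reducible: some proper subinterval
`{a,…,b}` of `{1,…,2n}` is invariant under `M_{π,ρ}`. -/
noncomputable def Reducible {n : ℕ} (π ρ : Setoid (Fin n)) : Prop :=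
  ∃ a b : Fin (2*n), a ≤ b ∧ b.val - a.val < 2*n - 1 ∧
    MInvariant (meanderMap π ρ) {x | a ≤ x ∧ x ≤ b}

/-- The join in the lattice of non-crossing partitions: the smallest
non-crossing partition above both `π` and `ρ`. -/
noncomputable def ncJoin {m : ℕ} (π ρ : Setoid (Fin m)) : Setoid (Fin m) :=
  sInf {τ | IsNC τ ∧ π ≤ τ ∧ ρ ≤ τ}

/-- The moment-cumulant formula of free probability: `mom n` is the sum over all
non-crossing partitions of `{1,…,n}` of the products of cumulants `κ` indexed
by the block sizes.  This uniquely determines the free cumulants `κ n`, `n ≥ 1`,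
of a sequence of moments. -/
def MomCum {F : Type*} [Field F] (mom κ : ℕ → F) : Prop :=
  ∀ n : ℕ, 0 < n →
    mom n = ∑ᶠ S ∈ {S : Setoid (Fin n) | IsNC S}, ∏ᶠ B ∈ Setoid.classes S, κ B.ncard

/-- The number of irreducible meandric systems on `2k` bridges, described as the
number of pairs `(π,ρ) ∈ NC(k)²` with `π ∨ ρ = 1_k`, `π ∧ ρ = 0_k`. -/
noncomputable def mirr (k : ℕ) : ℕ :=
  Nat.card {pr : Setoid (Fin k) × Setoid (Fin k) //
    IsNC pr.1 ∧ IsNC pr.2 ∧ ncJoin pr.1 pr.2 = ⊤ ∧ pr.1 ⊓ pr.2 = ⊥}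

/-- The number of pairs `(π,ρ) ∈ NC(n)²` whose meandric system `M_{π,ρ}` has
exactly `k` orbits (connected components). -/
noncomputable def mcount (n k : ℕ) : ℕ :=
  Nat.card {pr : Setoid (Fin n) × Setoid (Fin n) //
    IsNC pr.1 ∧ IsNC pr.2 ∧ numOrbits (meanderMap pr.1 pr.2) = k}

/-- The number of meanders on `2n` bridges. -/
noncomputable def meanderNum (n : ℕ) : ℕ := mcount n 1
section Basic
variable {n : ℕ} {S : Setoid (Fin n)}

lemma max'_congr {α : Type*} [LinearOrder α] {s t : Finset α} (h : s = t) (hs : s.Nonempty) :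
    s.max' hs = t.max' (h ▸ hs) := by subst h; rfl

lemma min'_congr {α : Type*} [LinearOrder α] {s t : Finset α} (h : s = t) (hs : s.Nonempty) :
    s.min' hs = t.min' (h ▸ hs) := by subst h; rfl

lemma mem_blockOf {i j : Fin n} : j ∈ blockOf S i ↔ S.r i j := by
  simp [blockOf]

lemma blockOf_eq {i j : Fin n} (h : S.r i j) : blockOf S i = blockOf S j := by
  ext x
  simp only [mem_blockOf]
  exact ⟨fun hx => S.iseqv.trans (S.iseqv.symm h) hx, fun hx => S.iseqv.trans h hx⟩

lemma r_nextP (S : Setoid (Fin n)) (i : Fin n) : S.r i (nextP S i) := by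
  unfold nextP
  split
  · next h =>
    have := Finset.min'_mem _ h
    rw [Finset.mem_filter] at this
    exact mem_blockOf.1 this.1
  · exact mem_blockOf.1 (Finset.min'_mem _ (blockOf_nonempty S i))

lemma r_prevP (S : Setoid (Fin n)) (i : Fin n) : S.r i (prevP S i) := by
  unfold prevP
  split
  · next h =>
    have := Finset.max'_mem _ h
    rw [Finset.mem_filter] at this
    exact mem_blockOf.1 this.1
  · exact mem_blockOf.1 (Finset.max'_mem _ (blockOf_nonempty S i))

lemma not_r_of_between {i m : Fin n} (h1 : i < m) (h2 : m < nextP S i) : ¬ S.r i m := by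
  intro hr
  have hm : m ∈ (blockOf S i).filter (fun j => i < j) := by
    rw [Finset.mem_filter, mem_blockOf]; exact ⟨hr, h1⟩
  have hne : ((blockOf S i).filter (fun j => i < j)).Nonempty := ⟨m, hm⟩
  have : nextP S i ≤ m := by
    unfold nextP
    rw [dif_pos hne]
    exact Finset.min'_le _ _ hm
  exact absurd h2 (not_lt.2 this)

lemma nextP_le_bounds {i : Fin n} (h : nextP S i ≤ i) {m : Fin n} (hr : S.r i m) :
    nextP S i ≤ m ∧ m ≤ i := by
  have hemp : ¬ ((blockOf S i).filter (fun j => i < j)).Nonempty := by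
    intro hne
    have : i < nextP S i := by
      unfold nextP
      rw [dif_pos hne]
      have := Finset.min'_mem _ hne
      rw [Finset.mem_filter] at this
      exact this.2
    exact absurd h (not_le.2 this)
  have hnext : nextP S i = (blockOf S i).min' (blockOf_nonempty S i) := by
    unfold nextP; rw [dif_neg hemp]
  constructor
  · rw [hnext]; exact Finset.min'_le _ _ (mem_blockOf.2 hr)
  · by_contra hc
    exact hemp ⟨m, by rw [Finset.mem_filter, mem_blockOf]; exact ⟨hr, not_le.1 hc⟩⟩

lemma prevP_nextP (S : Setoid (Fin n)) (i : Fin n) : prevP S (nextP S i) = i := by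
  have hB : blockOf S (nextP S i) = blockOf S i := (blockOf_eq (r_nextP S i)).symm
  by_cases h : ((blockOf S i).filter (fun j => i < j)).Nonempty
  · have hy : nextP S i = ((blockOf S i).filter (fun j => i < j)).min' h := by
      unfold nextP; rw [dif_pos h]
    have hiy : i < nextP S i := by
      rw [hy]
      have := Finset.min'_mem _ h
      rw [Finset.mem_filter] at this
      exact this.2
    have hmem : i ∈ (blockOf S (nextP S i)).filter (fun j => j < nextP S i) := by
      rw [Finset.mem_filter, hB, mem_blockOf]
      exact ⟨S.iseqv.refl i, hiy⟩
    have hne : ((blockOf S (nextP S i)).filter (fun j => j < nextP S i)).Nonempty := ⟨i, hmem⟩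
    unfold prevP
    rw [dif_pos hne]
    apply le_antisymm
    · apply Finset.max'_le
      intro x hx
      rw [Finset.mem_filter, hB, mem_blockOf] at hx
      by_contra hc
      have hix : i < x := not_le.1 hc
      have : nextP S i ≤ x := by
        unfold nextP
        rw [dif_pos h]
        exact Finset.min'_le _ _ (by rw [Finset.mem_filter, mem_blockOf]; exact ⟨hx.1, hix⟩)
      exact absurd hx.2 (not_lt.2 this)
    · exact Finset.le_max' _ _ hmem
  · have hy : nextP S i = (blockOf S i).min' (blockOf_nonempty S i) := by
      unfold nextP; rw [dif_neg h]
    have hemp : (blockOf S (nextP S i)).filter (fun j => j < nextP S i) = ∅ := by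
      rw [Finset.filter_eq_empty_iff]
      intro x hx
      rw [hB] at hx
      rw [hy]
      exact not_lt.2 (Finset.min'_le _ _ hx)
    unfold prevP
    rw [dif_neg (by rw [hemp]; exact fun hc => Finset.not_nonempty_empty hc)]
    apply le_antisymm
    · apply Finset.max'_le
      intro x hx
      rw [hB, mem_blockOf] at hx
      by_contra hc
      exact h ⟨x, by rw [Finset.mem_filter, mem_blockOf]; exact ⟨hx, not_le.1 hc⟩⟩
    · rw [max'_congr hB]; exact Finset.le_max' _ _ (mem_blockOf.2 (S.iseqv.refl i))

lemma nextP_prevP (S : Setoid (Fin n)) (i : Fin n) : nextP S (prevP S i) = i := by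
  have hB : blockOf S (prevP S i) = blockOf S i := (blockOf_eq (r_prevP S i)).symm
  by_cases h : ((blockOf S i).filter (fun j => j < i)).Nonempty
  · have hy : prevP S i = ((blockOf S i).filter (fun j => j < i)).max' h := by
      unfold prevP; rw [dif_pos h]
    have hiy : prevP S i < i := by
      rw [hy]
      have := Finset.max'_mem _ h
      rw [Finset.mem_filter] at this
      exact this.2
    have hmem : i ∈ (blockOf S (prevP S i)).filter (fun j => prevP S i < j) := by
      rw [Finset.mem_filter, hB, mem_blockOf]
      exact ⟨S.iseqv.refl i, hiy⟩
    have hne : ((blockOf S (prevP S i)).filter (fun j => prevP S i < j)).Nonempty := ⟨i, hmem⟩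
    unfold nextP
    rw [dif_pos hne]
    apply le_antisymm
    · exact Finset.min'_le _ _ hmem
    · apply Finset.le_min'
      intro x hx
      rw [Finset.mem_filter, hB, mem_blockOf] at hx
      by_contra hc
      have hxi : x < i := not_le.1 hc
      have : x ≤ prevP S i := by
        rw [hy]
        exact Finset.le_max' _ _ (by rw [Finset.mem_filter, mem_blockOf]; exact ⟨hx.1, hxi⟩)
      exact absurd hx.2 (not_lt.2 this)
  · have hy : prevP S i = (blockOf S i).max' (blockOf_nonempty S i) := by
      unfold prevP; rw [dif_neg h]
    have hemp : (blockOf S (prevP S i)).filter (fun j => prevP S i < j) = ∅ := by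
      rw [Finset.filter_eq_empty_iff]
      intro x hx
      rw [hB] at hx
      rw [hy]
      exact not_lt.2 (Finset.le_max' _ _ hx)
    unfold nextP
    rw [dif_neg (by rw [hemp]; exact fun hc => Finset.not_nonempty_empty hc)]
    apply le_antisymm
    · rw [min'_congr hB]
      exact Finset.min'_le _ _ (mem_blockOf.2 (S.iseqv.refl i))
    · apply Finset.le_min'
      intro x hx
      rw [hB, mem_blockOf] at hx
      by_contra hc
      exact h ⟨x, by rw [Finset.mem_filter, mem_blockOf]; exact ⟨hx, not_le.1 hc⟩⟩

lemma nextP_injective (S : Setoid (Fin n)) : Function.Injective (nextP S) :=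
  Function.LeftInverse.injective (prevP_nextP S)

end Basic
section Reach
variable {n : ℕ} {S : Setoid (Fin n)}

lemma r_iterate (S : Setoid (Fin n)) (m : ℕ) (i : Fin n) : S.r i ((nextP S)^[m] i) := by
  induction m with
  | zero => exact S.iseqv.refl i
  | succ m ih =>
    rw [Function.iterate_succ_apply']
    exact S.iseqv.trans ih (r_nextP S _)

lemma reach_max (S : Setoid (Fin n)) (i : Fin n) :
    ∃ m, (nextP S)^[m] i = (blockOf S i).max' (blockOf_nonempty S i) := by
  suffices H : ∀ N (i : Fin n),
      ((blockOf S i).max' (blockOf_nonempty S i)).val - i.val ≤ N →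
      ∃ m, (nextP S)^[m] i = (blockOf S i).max' (blockOf_nonempty S i) by
    exact H _ i le_rfl
  intro N
  induction N with
  | zero =>
    intro i h
    have hle : i ≤ (blockOf S i).max' (blockOf_nonempty S i) :=
      Finset.le_max' _ _ (mem_blockOf.2 (S.iseqv.refl i))
    have : i = (blockOf S i).max' (blockOf_nonempty S i) := by
      apply Fin.ext
      have := hle
      rw [Fin.le_def] at this
      omega
    exact ⟨0, by simpa using this⟩
  | succ N ih =>
    intro i h
    by_cases heq : i = (blockOf S i).max' (blockOf_nonempty S i)
    · exact ⟨0, by simpa using heq⟩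
    · have hle : i ≤ (blockOf S i).max' (blockOf_nonempty S i) :=
        Finset.le_max' _ _ (mem_blockOf.2 (S.iseqv.refl i))
      have hlt : i < (blockOf S i).max' (blockOf_nonempty S i) := lt_of_le_of_ne hle heq
      have hB : blockOf S (nextP S i) = blockOf S i := (blockOf_eq (r_nextP S i)).symm
      have hne : ((blockOf S i).filter (fun j => i < j)).Nonempty :=
        ⟨_, by rw [Finset.mem_filter]; exact ⟨Finset.max'_mem _ _, hlt⟩⟩
      have hgt : i < nextP S i := by
        unfold nextP
        rw [dif_pos hne]
        have := Finset.min'_mem _ hne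
        rw [Finset.mem_filter] at this
        exact this.2
      have hmax : (blockOf S (nextP S i)).max' (blockOf_nonempty S _) =
          (blockOf S i).max' (blockOf_nonempty S i) := max'_congr hB _
      have hmem : nextP S i ≤ (blockOf S i).max' (blockOf_nonempty S i) :=
        Finset.le_max' _ _ (mem_blockOf.2 (r_nextP S i))
      have hm : ((blockOf S (nextP S i)).max' (blockOf_nonempty S _)).val -
          (nextP S i).val ≤ N := by
        rw [hmax]
        rw [Fin.lt_def] at hgt hlt
        omega
      obtain ⟨m, hmm⟩ := ih (nextP S i) hm
      exact ⟨m + 1, by rw [Function.iterate_succ_apply, hmm, hmax]⟩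

lemma reach_from_min (S : Setoid (Fin n)) (j : Fin n) :
    ∃ m, (nextP S)^[m] ((blockOf S j).min' (blockOf_nonempty S j)) = j := by
  suffices H : ∀ N (j : Fin n), j.val ≤ N →
      ∃ m, (nextP S)^[m] ((blockOf S j).min' (blockOf_nonempty S j)) = j by
    exact H _ j le_rfl
  intro N
  induction N with
  | zero =>
    intro j h
    have hle : (blockOf S j).min' (blockOf_nonempty S j) ≤ j :=
      Finset.min'_le _ _ (mem_blockOf.2 (S.iseqv.refl j))
    have : (blockOf S j).min' (blockOf_nonempty S j) = j := by
      apply Fin.ext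
      rw [Fin.le_def] at hle
      omega
    exact ⟨0, this⟩
  | succ N ih =>
    intro j h
    by_cases heq : (blockOf S j).min' (blockOf_nonempty S j) = j
    · exact ⟨0, heq⟩
    · have hmin : (blockOf S j).min' (blockOf_nonempty S j) < j :=
        lt_of_le_of_ne (Finset.min'_le _ _ (mem_blockOf.2 (S.iseqv.refl j))) heq
      have hne : ((blockOf S j).filter (fun x => x < j)).Nonempty :=
        ⟨_, by rw [Finset.mem_filter]; exact ⟨Finset.min'_mem _ _, hmin⟩⟩
      have hp : prevP S j = ((blockOf S j).filter (fun x => x < j)).max' hne := by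
        unfold prevP; rw [dif_pos hne]
      have hplt : prevP S j < j := by
        rw [hp]
        have := Finset.max'_mem _ hne
        rw [Finset.mem_filter] at this
        exact this.2
      have hB : blockOf S (prevP S j) = blockOf S j := (blockOf_eq (r_prevP S j)).symm
      have hminp : (blockOf S (prevP S j)).min' (blockOf_nonempty S _) =
          (blockOf S j).min' (blockOf_nonempty S j) := min'_congr hB _
      obtain ⟨m, hmm⟩ := ih (prevP S j) (by rw [Fin.lt_def] at hplt; omega)
      refine ⟨m + 1, ?_⟩
      rw [Function.iterate_succ_apply', ← hminp, hmm, nextP_prevP]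

lemma r_iff_reach {i j : Fin n} : S.r i j ↔ ∃ m, (nextP S)^[m] i = j := by
  constructor
  · intro hr
    obtain ⟨s, hs⟩ := reach_max S i
    obtain ⟨t, ht⟩ := reach_from_min S j
    set M := (blockOf S i).max' (blockOf_nonempty S i) with hM
    have hrM : S.r i M := mem_blockOf.1 (Finset.max'_mem _ _)
    have hBM : blockOf S M = blockOf S i := (blockOf_eq hrM).symm
    have hemp : ¬ ((blockOf S M).filter (fun x => M < x)).Nonempty := by
      rintro ⟨x, hx⟩
      rw [Finset.mem_filter, hBM] at hx
      exact absurd hx.2 (not_lt.2 (Finset.le_max' _ _ hx.1))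
    have hMn : nextP S M = (blockOf S M).min' (blockOf_nonempty S M) := by
      unfold nextP; rw [dif_neg hemp]
    have hBij : blockOf S i = blockOf S j := blockOf_eq hr
    have hmin : (blockOf S M).min' (blockOf_nonempty S M) =
        (blockOf S j).min' (blockOf_nonempty S j) := min'_congr (by rw [hBM, hBij]) _
    refine ⟨t + 1 + s, ?_⟩
    rw [Function.iterate_add_apply, Function.iterate_add_apply, hs, Function.iterate_one,
      hMn, hmin, ht]
  · rintro ⟨m, rfl⟩
    exact r_iterate S m i
end Reach
section Arch
variable {n : ℕ} {S : Setoid (Fin n)}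

lemma dOdd_ne_dEven {j k : Fin n} : dOdd j ≠ dEven k := by
  intro h
  have := congrArg Fin.val h
  simp only [dOdd, dEven] at this
  omega

lemma dEven_inj {j k : Fin n} (h : dEven j = dEven k) : j = k := by
  have := congrArg Fin.val h
  simp only [dEven] at this
  exact Fin.ext (by omega)

lemma dOdd_inj {j k : Fin n} (h : dOdd j = dOdd k) : j = k := by
  have := congrArg Fin.val h
  simp only [dOdd] at this
  exact Fin.ext (by omega)

/-- characterization of the relation of `archSetoid S`. -/
lemma arch_r_iff {x y : Fin (2*n)} :
    (archSetoid S).r x y ↔ x = y ∨ ∃ j, (x = dOdd j ∧ y = dEven (nextP S j)) ∨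
      (y = dOdd j ∧ x = dEven (nextP S j)) := by
  constructor
  · intro h
    induction h with
    | rel a b hab => exact Or.inr ⟨hab.choose, Or.inl hab.choose_spec⟩
    | refl a => exact Or.inl rfl
    | symm a b _ ih =>
      rcases ih with h | ⟨j, h | h⟩
      · exact Or.inl h.symm
      · exact Or.inr ⟨j, Or.inr h⟩
      · exact Or.inr ⟨j, Or.inl h⟩
    | trans a b c _ _ ih1 ih2 =>
      rcases ih1 with h1 | ⟨j, hj⟩
      · subst h1
        exact ih2
      rcases ih2 with h2 | ⟨k, hk⟩
      · subst h2
        exact Or.inr ⟨j, hj⟩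
      rcases hj with ⟨haj, hbj⟩ | ⟨hbj, haj⟩
      · rcases hk with ⟨hbk, hck⟩ | ⟨hck, hbk⟩
        · exact absurd (hbk.symm.trans hbj) dOdd_ne_dEven
        · have hjk : j = k := nextP_injective S (dEven_inj (hbj.symm.trans hbk))
          exact Or.inl (haj.trans (hjk ▸ hck.symm))
      · rcases hk with ⟨hbk, hck⟩ | ⟨hck, hbk⟩
        · have hjk : j = k := dOdd_inj (hbj.symm.trans hbk)
          exact Or.inl (haj.trans (hjk ▸ hck.symm))
        · exact absurd (hbj.symm.trans hbk) dOdd_ne_dEven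
  · rintro (rfl | ⟨j, ⟨rfl, rfl⟩ | ⟨rfl, rfl⟩⟩)
    · exact (archSetoid S).iseqv.refl x
    · exact Relation.EqvGen.rel _ _ ⟨j, rfl, rfl⟩
    · exact (archSetoid S).iseqv.symm (Relation.EqvGen.rel _ _ ⟨j, rfl, rfl⟩)

lemma odd_form {x : Fin (2*n)} (h : x.val % 2 = 1) : ∃ j : Fin n, x = dOdd j := by
  have hx := x.isLt
  exact ⟨⟨x.val / 2, by omega⟩, Fin.ext (by simp [dOdd]; omega)⟩

lemma even_form {x : Fin (2*n)} (h : x.val % 2 = 0) : ∃ j : Fin n, x = dEven j := by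
  have hx := x.isLt
  exact ⟨⟨x.val / 2, by omega⟩, Fin.ext (by simp [dEven]; omega)⟩

lemma isPairing_arch (S : Setoid (Fin n)) : IsPairing (archSetoid S) := by
  intro x
  rcases Nat.mod_two_eq_zero_or_one x.val with hpar | hpar
  · obtain ⟨m, rfl⟩ := even_form hpar
    refine ⟨dOdd (prevP S m), dOdd_ne_dEven, ?_, ?_⟩
    · rw [arch_r_iff]
      exact Or.inr ⟨prevP S m, Or.inr ⟨rfl, by rw [nextP_prevP]⟩⟩
    · intro z hz
      rw [arch_r_iff] at hz
      rcases hz with h | ⟨k, ⟨hx, hz⟩ | ⟨hz, hx⟩⟩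
      · exact Or.inl h.symm
      · exact absurd hx.symm dOdd_ne_dEven
      · right
        have : nextP S k = m := dEven_inj hx.symm
        have : k = prevP S m := by rw [← this, prevP_nextP]
        rw [hz, this]
  · obtain ⟨j, rfl⟩ := odd_form hpar
    refine ⟨dEven (nextP S j), (Ne.symm dOdd_ne_dEven), ?_, ?_⟩
    · exact Relation.EqvGen.rel _ _ ⟨j, rfl, rfl⟩
    · intro z hz
      rw [arch_r_iff] at hz
      rcases hz with h | ⟨k, ⟨hx, hz⟩ | ⟨hz, hx⟩⟩
      · exact Or.inl h.symm
      · right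
        rw [hz, dOdd_inj hx]
      · exact absurd hx dOdd_ne_dEven

lemma isNC_arch (hS : IsNC S) : IsNC (archSetoid S) := by
  intro a b c d hab hbc hcd hac hbd
  exfalso
  rw [arch_r_iff] at hac hbd
  rcases hac with h | ⟨j, hj⟩
  · exact absurd h (ne_of_lt (lt_trans hab hbc))
  rcases hbd with h | ⟨k, hk⟩
  · exact absurd h (ne_of_lt (lt_trans hbc hcd))
  have hrj : S.r j (nextP S j) := r_nextP S j
  have hrk : S.r k (nextP S k) := r_nextP S k
  rcases hj with ⟨rfl, rfl⟩ | ⟨rfl, rfl⟩ <;> rcases hk with ⟨rfl, rfl⟩ | ⟨rfl, rfl⟩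
  · -- a = dOdd j, c = dEven (P j), b = dOdd k, d = dEven (P k)
    rw [Fin.lt_def] at hab hbc hcd
    simp only [dOdd, dEven] at hab hbc hcd
    have hjk : j < k := by rw [Fin.lt_def]; omega
    have hkPj : k < nextP S j := by rw [Fin.lt_def]; omega
    have hPjPk : nextP S j < nextP S k := by rw [Fin.lt_def]; omega
    exact not_r_of_between hjk hkPj (hS j k (nextP S j) (nextP S k) hjk hkPj hPjPk hrj hrk)
  · -- a = dOdd j, c = dEven (P j), b = dEven (P k), d = dOdd k ; P k ≤ k
    rw [Fin.lt_def] at hab hbc hcd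
    simp only [dOdd, dEven] at hab hbc hcd
    have hjPk : j < nextP S k := by rw [Fin.lt_def]; omega
    have hPkPj : nextP S k < nextP S j := by rw [Fin.lt_def]; omega
    have hPjk : nextP S j ≤ k := by rw [Fin.le_def]; omega
    -- show S.r j (nextP S k), contradict not_r_of_between
    have hrjPk : S.r j (nextP S k) := by
      rcases eq_or_lt_of_le hPjk with heq | hlt
      · exact S.iseqv.trans (heq ▸ hrj) hrk
      · exact hS j (nextP S k) (nextP S j) k hjPk hPkPj hlt hrj (S.iseqv.symm hrk)
    exact not_r_of_between hjPk hPkPj hrjPk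
  · -- a = dEven (P j), c = dOdd j, b = dOdd k, d = dEven (P k) ; P j ≤ j
    rw [Fin.lt_def] at hab hbc hcd
    simp only [dOdd, dEven] at hab hbc hcd
    have hPjle : nextP S j ≤ j := by rw [Fin.le_def]; omega
    have hPjk : nextP S j ≤ k := by rw [Fin.le_def]; omega
    have hkj : k < j := by rw [Fin.lt_def]; omega
    have hjPk : j < nextP S k := by rw [Fin.lt_def]; omega
    have hrjk : S.r j k := by
      rcases eq_or_lt_of_le hPjk with heq | hlt
      · exact heq ▸ hrj
      · exact S.iseqv.trans hrj (hS (nextP S j) k j (nextP S k) hlt hkj hjPk (S.iseqv.symm hrj) hrk)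
    have : S.r j (nextP S k) := S.iseqv.trans hrjk hrk
    have := (nextP_le_bounds hPjle this).2
    exact absurd hjPk (not_lt.2 this)
  · -- a = dEven (P j), c = dOdd j, b = dEven (P k), d = dOdd k ; P j ≤ j, P k ≤ k
    rw [Fin.lt_def] at hab hbc hcd
    simp only [dOdd, dEven] at hab hbc hcd
    have hPjle : nextP S j ≤ j := by rw [Fin.le_def]; omega
    have hPjPk : nextP S j < nextP S k := by rw [Fin.lt_def]; omega
    have hPkj : nextP S k ≤ j := by rw [Fin.le_def]; omega
    have hjk : j < k := by rw [Fin.lt_def]; omega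
    have hrjk : S.r j k := by
      rcases eq_or_lt_of_le hPkj with heq | hlt
      · exact S.iseqv.symm (heq ▸ hrk)
      · have h1 : S.r (nextP S j) (nextP S k) :=
          hS (nextP S j) (nextP S k) j k hPjPk hlt hjk (S.iseqv.symm hrj) (S.iseqv.symm hrk)
        exact S.iseqv.trans (S.iseqv.trans hrj h1) (S.iseqv.symm hrk)
    have := (nextP_le_bounds hPjle hrjk).2
    exact absurd hjk (not_lt.2 this)

end Arch
section Inj
variable {n : ℕ}

lemma arch_injective : Function.Injective (archSetoid : Setoid (Fin n) → Setoid (Fin (2*n))) := by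
  intro S S' h
  have hnext : nextP S = nextP S' := by
    funext j
    have h1 : (archSetoid S).r (dOdd j) (dEven (nextP S j)) :=
      Relation.EqvGen.rel _ _ ⟨j, rfl, rfl⟩
    rw [h, arch_r_iff] at h1
    rcases h1 with h1 | ⟨k, ⟨hk1, hk2⟩ | ⟨hk1, hk2⟩⟩
    · exact absurd h1 dOdd_ne_dEven
    · obtain rfl := dOdd_inj hk1
      exact dEven_inj hk2
    · exact absurd hk2 dOdd_ne_dEven
  ext i j
  show S.r i j ↔ S'.r i j
  rw [r_iff_reach, r_iff_reach, hnext]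
end Inj

section Pairing
variable {m : ℕ} {T : Setoid (Fin m)}

lemma pairing_unique (hP : IsPairing T) {x y z : Fin m} (hy : T.r x y) (hz : T.r x z)
    (hyx : y ≠ x) (hzx : z ≠ x) : y = z := by
  obtain ⟨w, _, _, hw⟩ := hP x
  rcases hw y hy with h | h
  · exact absurd h hyx
  rcases hw z hz with h' | h'
  · exact absurd h' hzx
  rw [h, h']

/-- partner stays strictly inside a block-interval, for non-crossing pairings. -/
lemma span_in (hNC : IsNC T) (hP : IsPairing T) {p q u v : Fin m} (hpq : T.r p q)
    (hlt : p < q) (huv : T.r u v) (hne : v ≠ u) (h1 : p < u) (h2 : u < q) :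
    p < v ∧ v < q := by
  have hvp : v ≠ p := by
    rintro rfl
    have : u = q := pairing_unique hP (T.iseqv.symm huv) hpq h1.ne' hlt.ne'
    exact h2.ne this
  have hvq : v ≠ q := by
    rintro rfl
    have : u = p := pairing_unique hP (T.iseqv.symm huv) (T.iseqv.symm hpq) h2.ne hlt.ne
    exact h1.ne' this
  constructor
  · rcases lt_trichotomy v p with h | h | h
    · exfalso
      have hvu : T.r v u := T.iseqv.symm huv
      have hvpr : T.r v p := hNC v p u q h h1 h2 hvu hpq
      have : u = p := pairing_unique hP hvu hvpr (Ne.symm hne) hvp.symm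
      exact h1.ne' this
    · exact absurd h hvp
    · exact h
  · rcases lt_trichotomy v q with h | h | h
    · exact h
    · exact absurd h hvq
    · exfalso
      have hpu : T.r p u := hNC p u q v h1 h2 h hpq huv
      have : u = q := pairing_unique hP hpu hpq h1.ne' hlt.ne'
      exact h2.ne this

/-- partner stays strictly outside a block-interval, for non-crossing pairings. -/
lemma span_out (hNC : IsNC T) (hP : IsPairing T) {p q u v : Fin m} (hpq : T.r p q)
    (hlt : p < q) (huv : T.r u v) (hne : v ≠ u) (h1 : u < p ∨ q < u) :
    v < p ∨ q < v := by
  have hup : u ≠ p := by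
    rintro rfl
    rcases h1 with h | h
    · exact absurd h (lt_irrefl _)
    · exact absurd (hlt.trans h) (lt_irrefl _)
  have huq : u ≠ q := by
    rintro rfl
    rcases h1 with h | h
    · exact absurd (h.trans hlt) (lt_irrefl _)
    · exact absurd h (lt_irrefl _)
  have hvp : v ≠ p := by
    rintro rfl
    have : u = q := pairing_unique hP (T.iseqv.symm huv) hpq hup hlt.ne'
    exact huq this
  have hvq : v ≠ q := by
    rintro rfl
    have : u = p := pairing_unique hP (T.iseqv.symm huv) (T.iseqv.symm hpq) huq hlt.ne
    exact hup this
  by_contra hc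
  push_neg at hc
  have hpv : p < v := lt_of_le_of_ne hc.1 (Ne.symm hvp)
  have hvq' : v < q := lt_of_le_of_ne hc.2 hvq
  have := span_in hNC hP hpq hlt (T.iseqv.symm huv) (Ne.symm hne) hpv hvq'
  rcases h1 with h | h
  · exact absurd (this.1.trans h) (lt_irrefl _)
  · exact absurd (h.trans this.2) (lt_irrefl _)

lemma even_card_of_invol {α : Type*} [DecidableEq α] :
    ∀ (N : ℕ) (A : Finset α) (g : α → α), A.card ≤ N →
      (∀ x ∈ A, g x ∈ A ∧ g (g x) = x ∧ g x ≠ x) → Even A.card := by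
  intro N
  induction N with
  | zero => intro A g h _; interval_cases h' : A.card; · exact Even.zero
  | succ N ih =>
    intro A g hcard hg
    rcases A.eq_empty_or_nonempty with rfl | ⟨x, hx⟩
    · simp
    obtain ⟨hgx, hggx, hgxne⟩ := hg x hx
    set B := (A.erase x).erase (g x) with hB
    have hgxA : g x ∈ A.erase x := Finset.mem_erase.2 ⟨hgxne, hgx⟩
    have hcardB : B.card = A.card - 2 := by
      rw [hB, Finset.card_erase_of_mem hgxA, Finset.card_erase_of_mem hx]
      omega
    have hA2 : 2 ≤ A.card := by
      have h1 : 0 < (A.erase x).card := Finset.card_pos.2 ⟨g x, hgxA⟩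
      have h2 : (A.erase x).card = A.card - 1 := Finset.card_erase_of_mem hx
      omega
    have hgB : ∀ y ∈ B, g y ∈ B ∧ g (g y) = y ∧ g y ≠ y := by
      intro y hy
      rw [hB, Finset.mem_erase, Finset.mem_erase] at hy
      obtain ⟨hygx, hyx, hyA⟩ := hy
      obtain ⟨hgyA, hggy, hgyne⟩ := hg y hyA
      refine ⟨?_, hggy, hgyne⟩
      rw [hB, Finset.mem_erase, Finset.mem_erase]
      refine ⟨?_, ?_, hgyA⟩
      · intro hc; exact hyx (by rw [← hggy, hc, hggx])
      · intro hc; exact hygx (by rw [← hc, hggy])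
    have hev : Even B.card := ih B g (by omega) hgB
    have : A.card = B.card + 2 := by omega
    rw [this]
    exact hev.add even_two

lemma parity_of_r_aux (hNC : IsNC T) (hP : IsPairing T) {x y : Fin m} (hr : T.r x y)
    (hlt : x < y) : (x.val + y.val) % 2 = 1 := by
  classical
  set I := Finset.Ioo x y with hI
  have hgdef : ∀ z : Fin m, (hP z).choose ≠ z ∧ T.r z ((hP z).choose) ∧
      ∀ w, T.r z w → w = z ∨ w = (hP z).choose := fun z => (hP z).choose_spec
  set g : Fin m → Fin m := fun z => (hP z).choose with hgd
  have hprop : ∀ z ∈ I, g z ∈ I ∧ g (g z) = z ∧ g z ≠ z := by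
    intro z hz
    rw [hI, Finset.mem_Ioo] at hz
    obtain ⟨hne, hrz, huniq⟩ := hgdef z
    have hin := span_in hNC hP hr hlt hrz hne hz.1 hz.2
    refine ⟨by rw [hI, Finset.mem_Ioo]; exact hin, ?_, hne⟩
    obtain ⟨hne2, hrz2, huniq2⟩ := hgdef (g z)
    rcases huniq2 z (T.iseqv.symm hrz) with h | h
    · exact absurd h.symm hne
    · exact h.symm
  have hev : Even I.card := even_card_of_invol I.card I g le_rfl hprop
  have hcard : I.card = y.val - x.val - 1 := by
    rw [hI, Fin.card_Ioo]
  obtain ⟨k, hk⟩ := hev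
  rw [Fin.lt_def] at hlt
  omega

/-- in a non-crossing pairing, related distinct points have opposite parity. -/
lemma parity_of_r (hNC : IsNC T) (hP : IsPairing T) {x y : Fin m} (hr : T.r x y)
    (hne : x ≠ y) : (x.val + y.val) % 2 = 1 := by
  rcases lt_trichotomy x y with hlt | heq | hlt
  · exact parity_of_r_aux hNC hP hr hlt
  · exact absurd heq hne
  · have := parity_of_r_aux hNC hP (T.iseqv.symm hr) hlt
    omega
end Pairing
section Orbit
variable {N : ℕ}

lemma orbit_rel_iterate (f : Fin N → Fin N) (s : ℕ) (x : Fin N) :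
    (orbitSetoid f).r x (f^[s] x) := by
  induction s with
  | zero => exact (orbitSetoid f).iseqv.refl x
  | succ s ih =>
    rw [Function.iterate_succ_apply']
    exact (orbitSetoid f).iseqv.trans ih (Relation.EqvGen.rel _ _ rfl)

lemma orbit_r_iff {f : Fin N → Fin N} {x y : Fin N} :
    (orbitSetoid f).r x y ↔ ∃ s t, f^[s] x = f^[t] y := by
  constructor
  · intro h
    induction h with
    | rel a b hab => exact ⟨1, 0, by simpa using hab⟩
    | refl a => exact ⟨0, 0, rfl⟩
    | symm a b _ ih => obtain ⟨s, t, h⟩ := ih; exact ⟨t, s, h.symm⟩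
    | trans a b c _ _ ih1 ih2 =>
      obtain ⟨s, t, h1⟩ := ih1
      obtain ⟨s', t', h2⟩ := ih2
      refine ⟨s' + s, t + t', ?_⟩
      rw [Function.iterate_add_apply, h1, ← Function.iterate_add_apply, add_comm s' t,
        Function.iterate_add_apply, h2, ← Function.iterate_add_apply]
  · rintro ⟨s, t, h⟩
    exact (orbitSetoid f).iseqv.trans (orbit_rel_iterate f s x)
      (h ▸ (orbitSetoid f).iseqv.symm (orbit_rel_iterate f t y))

lemma iterate_mem_of_closed {f : Fin N → Fin N} {P : Fin N → Prop}
    (hf : ∀ m, P m → P (f m)) (s : ℕ) {x : Fin N} (hx : P x) : P (f^[s] x) := by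
  induction s with
  | zero => exact hx
  | succ s ih => rw [Function.iterate_succ_apply']; exact hf _ ih

lemma mem_of_iterate_mem {f : Fin N → Fin N} {P : Fin N → Prop}
    (hb : ∀ m, P (f m) → P m) : ∀ (s : ℕ) (x : Fin N), P (f^[s] x) → P x := by
  intro s
  induction s with
  | zero => exact fun x h => h
  | succ s ih =>
    intro x h
    rw [Function.iterate_succ_apply] at h
    exact hb x (ih (f x) h)

lemma not_orbit_of_closed {f : Fin N → Fin N} {P : Fin N → Prop}
    (hf : ∀ m, P m → P (f m)) (hb : ∀ m, P (f m) → P m) {j x : Fin N}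
    (hr : (orbitSetoid f).r j x) (hx : P x) (hj : ¬ P j) : False := by
  obtain ⟨s, t, h⟩ := orbit_r_iff.1 hr
  exact hj (mem_of_iterate_mem hb s j (h ▸ iterate_mem_of_closed hf t hx))

end Orbit
section Surj
variable {n : ℕ}

lemma surj_arch {T : Setoid (Fin (2*n))} (hNC : IsNC T) (hP : IsPairing T) :
    ∃ S : Setoid (Fin n), IsNC S ∧ archSetoid S = T := by
  classical
  -- the partner of each odd point is even
  have hpartner : ∀ j : Fin n, ∃ k : Fin n, T.r (dOdd j) (dEven k) := by
    intro j
    obtain ⟨y, hyne, hy, _⟩ := hP (dOdd j)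
    have hpar := parity_of_r hNC hP hy (Ne.symm hyne)
    have hy2 : y.val % 2 = 0 := by
      simp only [dOdd] at hpar
      omega
    obtain ⟨k, rfl⟩ := even_form hy2
    exact ⟨k, hy⟩
  choose f hf using hpartner
  have huniq : ∀ (j : Fin n) (y : Fin (2*n)), T.r (dOdd j) y → y ≠ dOdd j → y = dEven (f j) :=
    fun j y hy hne => pairing_unique hP hy (hf j) hne (Ne.symm dOdd_ne_dEven)
  -- the four invariance properties of intervals under f
  have hinvf : ∀ j m : Fin n, j < f j → j < m → m < f j → j < f m ∧ f m < f j := by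
    intro j m hgt h1 h2
    rw [Fin.lt_def] at hgt h1 h2
    have hlt' : (dOdd j : Fin (2*n)) < dEven (f j) := by
      simp only [Fin.lt_def, dOdd, dEven]; omega
    have hs := span_in hNC hP (hf j) hlt' (hf m) (Ne.symm dOdd_ne_dEven)
      (by simp only [Fin.lt_def, dOdd]; omega)
      (by simp only [Fin.lt_def, dOdd, dEven]; omega)
    rw [Fin.lt_def, Fin.lt_def] at hs
    simp only [dOdd, dEven] at hs
    rw [Fin.lt_def, Fin.lt_def]
    omega
  have hinvb : ∀ j a : Fin n, j < f j → j < f a → f a < f j → j < a ∧ a < f j := by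
    intro j a hgt h1 h2
    rw [Fin.lt_def] at hgt h1 h2
    have hlt' : (dOdd j : Fin (2*n)) < dEven (f j) := by
      simp only [Fin.lt_def, dOdd, dEven]; omega
    have huv : T.r (dEven (f a)) (dOdd a) := T.iseqv.symm (hf a)
    have hs := span_in hNC hP (hf j) hlt' huv dOdd_ne_dEven
      (by simp only [Fin.lt_def, dOdd, dEven]; omega)
      (by simp only [Fin.lt_def, dEven]; omega)
    rw [Fin.lt_def, Fin.lt_def] at hs
    simp only [dOdd, dEven] at hs
    rw [Fin.lt_def, Fin.lt_def]
    omega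
  have hinvf2 : ∀ j m : Fin n, f j ≤ j → (m < f j ∨ j < m) → (f m < f j ∨ j < f m) := by
    intro j m hle hm
    rw [Fin.le_def] at hle
    rw [Fin.lt_def, Fin.lt_def] at hm
    have hlt' : (dEven (f j) : Fin (2*n)) < dOdd j := by
      simp only [Fin.lt_def, dOdd, dEven]; omega
    have hs := span_out hNC hP (T.iseqv.symm (hf j)) hlt' (hf m) (Ne.symm dOdd_ne_dEven)
      (by simp only [Fin.lt_def, dOdd, dEven]; omega)
    rw [Fin.lt_def, Fin.lt_def] at hs
    simp only [dOdd, dEven] at hs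
    rw [Fin.lt_def, Fin.lt_def]
    omega
  have hinvb2 : ∀ j a : Fin n, f j ≤ j → (f a < f j ∨ j < f a) → (a < f j ∨ j < a) := by
    intro j a hle ha
    rw [Fin.le_def] at hle
    rw [Fin.lt_def, Fin.lt_def] at ha
    have hlt' : (dEven (f j) : Fin (2*n)) < dOdd j := by
      simp only [Fin.lt_def, dOdd, dEven]; omega
    have huv : T.r (dEven (f a)) (dOdd a) := T.iseqv.symm (hf a)
    have hs := span_out hNC hP (T.iseqv.symm (hf j)) hlt' huv dOdd_ne_dEven
      (by simp only [Fin.lt_def, dOdd, dEven]; omega)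
    rw [Fin.lt_def, Fin.lt_def] at hs
    simp only [dOdd, dEven] at hs
    rw [Fin.lt_def, Fin.lt_def]
    omega
  set S : Setoid (Fin n) := orbitSetoid f with hS
  have hrf : ∀ j : Fin n, S.r j (f j) := fun j => Relation.EqvGen.rel _ _ rfl
  -- key : nextP S = f
  have hkey : ∀ j : Fin n, nextP S j = f j := by
    intro j
    rcases lt_or_ge j (f j) with hgt | hle
    · -- no element of the block strictly between j and f j
      have hmid : ∀ x : Fin n, S.r j x → ¬ (j < x ∧ x < f j) := by
        intro x hx hPx
        exact not_orbit_of_closed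
          (fun m hm => hinvf j m hgt hm.1 hm.2)
          (fun a ha => hinvb j a hgt ha.1 ha.2)
          hx hPx (fun hc => absurd hc.1 (lt_irrefl j))
      have hne : ((blockOf S j).filter (fun x => j < x)).Nonempty :=
        ⟨f j, by rw [Finset.mem_filter, mem_blockOf]; exact ⟨hrf j, hgt⟩⟩
      have hn : nextP S j = ((blockOf S j).filter (fun x => j < x)).min' hne := by
        unfold nextP; rw [dif_pos hne]
      have hmem := Finset.min'_mem _ hne
      rw [Finset.mem_filter, mem_blockOf] at hmem
      rw [hn]
      apply le_antisymm
      · exact Finset.min'_le _ _ (by rw [Finset.mem_filter, mem_blockOf]; exact ⟨hrf j, hgt⟩)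
      · by_contra hc
        exact hmid _ hmem.1 ⟨hmem.2, not_le.1 hc⟩
    · -- block contained in [f j, j]
      have hbound : ∀ x : Fin n, S.r j x → f j ≤ x ∧ x ≤ j := by
        intro x hx
        have hnP : ¬ (x < f j ∨ j < x) := by
          intro hPx
          exact not_orbit_of_closed
            (fun m hm => hinvf2 j m hle hm)
            (fun a ha => hinvb2 j a hle ha)
            hx hPx
            (by rw [Fin.le_def] at hle; rw [Fin.lt_def, Fin.lt_def]; omega)
        push_neg at hnP
        exact ⟨hnP.1, hnP.2⟩
      have hemp : ¬ ((blockOf S j).filter (fun x => j < x)).Nonempty := by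
        rintro ⟨x, hx⟩
        rw [Finset.mem_filter, mem_blockOf] at hx
        exact absurd hx.2 (not_lt.2 (hbound x hx.1).2)
      have hn : nextP S j = (blockOf S j).min' (blockOf_nonempty S j) := by
        unfold nextP; rw [dif_neg hemp]
      rw [hn]
      apply le_antisymm
      · exact Finset.min'_le _ _ (mem_blockOf.2 (hrf j))
      · apply Finset.le_min'
        intro x hx
        exact (hbound x (mem_blockOf.1 hx)).1
  -- S is non-crossing
  have hSNC : IsNC S := by
    intro a b c d hab hbc hcd hac hbd
    by_contra hnr
    exfalso
    have hane : ((blockOf S a).filter (fun x => x < b)).Nonempty :=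
      ⟨a, by rw [Finset.mem_filter, mem_blockOf]; exact ⟨S.iseqv.refl a, hab⟩⟩
    set x := ((blockOf S a).filter (fun x => x < b)).max' hane with hxdef
    have hxmem := Finset.max'_mem _ hane
    rw [Finset.mem_filter, mem_blockOf] at hxmem
    obtain ⟨hrax, hxb⟩ := hxmem
    have hrxc : S.r x c := S.iseqv.trans (S.iseqv.symm hrax) hac
    have hxc : x < c := lt_trans hxb hbc
    have hne : ((blockOf S x).filter (fun z => x < z)).Nonempty :=
      ⟨c, by rw [Finset.mem_filter, mem_blockOf]; exact ⟨hrxc, hxc⟩⟩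
    have hn : nextP S x = ((blockOf S x).filter (fun z => x < z)).min' hne := by
      unfold nextP; rw [dif_pos hne]
    have hmem := Finset.min'_mem _ hne
    rw [Finset.mem_filter, mem_blockOf] at hmem
    have hxy : x < nextP S x := by rw [hn]; exact hmem.2
    have hrxy : S.r x (nextP S x) := by rw [hn]; exact hmem.1
    have hyc : nextP S x ≤ c := by
      rw [hn]
      exact Finset.min'_le _ _ (by rw [Finset.mem_filter, mem_blockOf]; exact ⟨hrxc, hxc⟩)
    have hray : S.r a (nextP S x) := S.iseqv.trans hrax hrxy
    have hby : b < nextP S x := by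
      rcases lt_trichotomy (nextP S x) b with h | h | h
      · exfalso
        have : nextP S x ≤ x := Finset.le_max' _ _
          (by rw [Finset.mem_filter, mem_blockOf]; exact ⟨hray, h⟩)
        exact absurd hxy (not_lt.2 this)
      · exact absurd (h ▸ hray) hnr
      · exact h
    -- now use interval invariance for the edge (x, f x)
    have hgt : x < f x := hkey x ▸ hxy
    have hfy : f x = nextP S x := (hkey x).symm
    have hPb : x < b ∧ b < f x := ⟨hxb, hfy ▸ hby⟩
    have hnPd : ¬ (x < d ∧ d < f x) := by
      rintro ⟨_, h2⟩
      rw [hfy] at h2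
      exact absurd (lt_trans hcd (lt_of_lt_of_le h2 hyc)) (lt_irrefl _)
    exact not_orbit_of_closed
      (fun m hm => hinvf x m hgt hm.1 hm.2)
      (fun a' ha' => hinvb x a' hgt ha'.1 ha'.2)
      ((orbitSetoid f).iseqv.symm hbd) hPb hnPd
  -- archSetoid S = T
  refine ⟨S, hSNC, ?_⟩
  apply Setoid.ext
  intro x y
  constructor
  · intro h
    rw [arch_r_iff] at h
    rcases h with rfl | ⟨j, ⟨rfl, rfl⟩ | ⟨rfl, rfl⟩⟩
    · exact T.iseqv.refl x
    · rw [hkey j]; exact hf j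
    · rw [hkey j]; exact T.iseqv.symm (hf j)
  · intro h
    rw [arch_r_iff]
    by_cases hxy : x = y
    · exact Or.inl hxy
    right
    rcases Nat.mod_two_eq_zero_or_one x.val with hpar | hpar
    · -- x even, y odd
      have hpxy := parity_of_r hNC hP h hxy
      have hy2 : y.val % 2 = 1 := by omega
      obtain ⟨k, rfl⟩ := odd_form hy2
      have hx' : x = dEven (f k) := huniq k x (T.iseqv.symm h)
        (by intro hc; rw [hc] at hpar; simp [dOdd] at hpar)
      exact ⟨k, Or.inr ⟨rfl, by rw [hkey k]; exact hx'⟩⟩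
    · obtain ⟨j, rfl⟩ := odd_form hpar
      have hy' : y = dEven (f j) := huniq j y h (Ne.symm hxy)
      exact ⟨j, Or.inl ⟨rfl, by rw [hkey j]; exact hy'⟩⟩
end Surj
/-- The doubling construction `π ↦ A(π)` is a bijection from the set of
non-crossing partitions of `{1,…,n}` onto the set of non-crossing pairings
of `{1,…,2n}`. -/
theorem doubling_construction_bijective (n : ℕ) :
    Set.BijOn (fun S : Setoid (Fin n) => archSetoid S)
      {S : Setoid (Fin n) | IsNC S}
      {T : Setoid (Fin (2*n)) | IsNC T ∧ IsPairing T} := by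
  refine ⟨fun S hS => ⟨isNC_arch hS, isPairing_arch S⟩, arch_injective.injOn, ?_⟩
  intro T hT
  obtain ⟨S, hSNC, hST⟩ := surj_arch hT.1 hT.2
  exact ⟨S, hSNC, hST⟩
end

section
/- Let π ∈ NC(n) and 1 ≤ p < q ≤ n. Then the set [2p, 2q−1] ∩ ℤ is a union of blocks of the arch-diagram A(π) ∈ NCP(2n) if and only if p and q belong to the same block of π. -/
open scoped Classical

lemma nextP_rel {n : ℕ} (S : Setoid (Fin n)) (j : Fin n) : S.r j (nextP S j) := by
  unfold nextP
  split
  · next h =>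
    have h1 := Finset.min'_mem _ h
    rw [Finset.mem_filter] at h1
    have h2 := h1.1
    simpa [blockOf] using h2
  · have h1 := Finset.min'_mem _ (blockOf_nonempty S j)
    simpa [blockOf] using h1

lemma nextP_gt {n : ℕ} (S : Setoid (Fin n)) {j k : Fin n} (hk : S.r j k) (hjk : j < k) :
    j < nextP S j ∧ nextP S j ≤ k := by
  have hc : ((blockOf S j).filter (fun l => j < l)).Nonempty :=
    ⟨k, by simp [blockOf, hk, hjk]⟩
  unfold nextP
  rw [dif_pos hc]
  constructor
  · have h1 := Finset.min'_mem _ hc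
    rw [Finset.mem_filter] at h1
    exact h1.2
  · exact Finset.min'_le _ _ (by simp [blockOf, hk, hjk])

lemma nextP_le_of_le {n : ℕ} (S : Setoid (Fin n)) {j : Fin n} (h : nextP S j ≤ j) :
    ∀ k, S.r j k → nextP S j ≤ k := by
  intro k hk
  unfold nextP at h ⊢
  by_cases hc : ((blockOf S j).filter (fun l => j < l)).Nonempty
  · rw [dif_pos hc] at h
    have h1 := Finset.min'_mem _ hc
    rw [Finset.mem_filter] at h1
    exact absurd (lt_of_lt_of_le h1.2 h) (lt_irrefl j)
  · rw [dif_neg hc]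
    exact Finset.min'_le _ _ (by simp [blockOf, hk])

lemma nextP_le_of_empty {n : ℕ} (S : Setoid (Fin n)) {j k : Fin n}
    (hc : ¬ ((blockOf S j).filter (fun l => j < l)).Nonempty) (hk : S.r j k) :
    nextP S j ≤ k := by
  unfold nextP
  rw [dif_neg hc]
  exact Finset.min'_le _ _ (by simp [blockOf, hk])

/-- For `π ∈ NC(n)` and `1 ≤ p < q ≤ n` (here `0`-indexed): the interval
`[2p, 2q-1] ∩ ℤ` is a union of blocks of `A(π)` iff `p` and `q` belong to the
same block of `π`. -/
theorem interval_blockUnion_arch_iff_same_block (n : ℕ) (S : Setoid (Fin n))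
    (hS : IsNC S) (p q : Fin n) (hpq : p < q) :
    IsBlockUnion (archSetoid S)
        {x : Fin (2*n) | 2*p.val + 1 ≤ x.val ∧ x.val ≤ 2*q.val}
      ↔ S.r p q := by
  have hpq' : p.val < q.val := Fin.lt_def.mp hpq
  have hstep : IsBlockUnion (archSetoid S)
      {x : Fin (2*n) | 2*p.val + 1 ≤ x.val ∧ x.val ≤ 2*q.val} ↔
      ∀ j : Fin n, (p.val ≤ j.val ∧ j.val < q.val) ↔
        (p.val < (nextP S j).val ∧ (nextP S j).val ≤ q.val) := by
    constructor
    · intro H j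
      have h1 : dOdd j ∈ {x : Fin (2*n) | 2*p.val + 1 ≤ x.val ∧ x.val ≤ 2*q.val} →
          dEven (nextP S j) ∈ {x : Fin (2*n) | 2*p.val + 1 ≤ x.val ∧ x.val ≤ 2*q.val} :=
        fun h => H _ h _ (Relation.EqvGen.rel _ _ ⟨j, rfl, rfl⟩)
      have h2 : dEven (nextP S j) ∈ {x : Fin (2*n) | 2*p.val + 1 ≤ x.val ∧ x.val ≤ 2*q.val} →
          dOdd j ∈ {x : Fin (2*n) | 2*p.val + 1 ≤ x.val ∧ x.val ≤ 2*q.val} :=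
        fun h => H _ h _ (Relation.EqvGen.symm _ _ (Relation.EqvGen.rel _ _ ⟨j, rfl, rfl⟩))
      constructor
      · intro hj
        have h3 := h1 (by simp only [dOdd, Set.mem_setOf_eq]; omega)
        simp only [dEven, Set.mem_setOf_eq] at h3
        omega
      · intro hj
        have h3 := h2 (by simp only [dEven, Set.mem_setOf_eq]; omega)
        simp only [dOdd, Set.mem_setOf_eq] at h3
        omega
    · intro H x hx y hxy
      have key : ∀ a b : Fin (2*n),
          Relation.EqvGen (fun a b => ∃ j : Fin n, a = dOdd j ∧ b = dEven (nextP S j)) a b →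
          (a ∈ {x : Fin (2*n) | 2*p.val + 1 ≤ x.val ∧ x.val ≤ 2*q.val} ↔
           b ∈ {x : Fin (2*n) | 2*p.val + 1 ≤ x.val ∧ x.val ≤ 2*q.val}) := by
        intro a b hab
        induction hab with
        | rel a b h =>
          obtain ⟨j, rfl, rfl⟩ := h
          have h4 := H j
          simp only [dOdd, dEven, Set.mem_setOf_eq]
          omega
        | refl => exact Iff.rfl
        | symm _ _ _ ih => exact ih.symm
        | trans _ _ _ _ _ ih1 ih2 => exact ih1.trans ih2
      exact (key x y hxy).mp hx
  rw [hstep]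
  constructor
  · -- block union condition → p ~ q
    intro H
    have hpT : p ∈ (blockOf S p).filter (fun m => m.val < q.val) := by
      simp only [Finset.mem_filter, blockOf, Finset.mem_univ, true_and]
      exact ⟨S.iseqv.refl p, hpq'⟩
    have hTne : ((blockOf S p).filter (fun m => m.val < q.val)).Nonempty := ⟨p, hpT⟩
    set m := ((blockOf S p).filter (fun m => m.val < q.val)).max' hTne with hm
    have hmT := Finset.max'_mem _ hTne
    rw [← hm] at hmT
    have hm1 : S.r p m ∧ m.val < q.val := by simpa [blockOf] using hmT
    have hple : p.val ≤ m.val := Fin.le_def.mp (Finset.le_max' _ p hpT)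
    obtain ⟨h1, h2⟩ := (H m).mp ⟨hple, hm1.2⟩
    have hrel : S.r m (nextP S m) := nextP_rel S m
    by_cases heq : (nextP S m).val = q.val
    · have hq : nextP S m = q := Fin.ext heq
      exact S.iseqv.trans hm1.1 (hq ▸ hrel)
    · exfalso
      have hlt : (nextP S m).val < q.val := lt_of_le_of_ne h2 heq
      have hmemT : nextP S m ∈ (blockOf S p).filter (fun m => m.val < q.val) := by
        simp only [Finset.mem_filter, blockOf, Finset.mem_univ, true_and]
        exact ⟨S.iseqv.trans hm1.1 hrel, hlt⟩
      have hle : nextP S m ≤ m := Finset.le_max' _ _ hmemT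
      have hle2 : nextP S m ≤ p := nextP_le_of_le S hle p (S.iseqv.symm hm1.1)
      exact absurd (Fin.le_def.mp hle2) (by omega)
  · -- p ~ q → block union condition
    intro hpqr j
    constructor
    · rintro ⟨h1, h2⟩
      by_cases hj : S.r p j
      · have hjq : S.r j q := S.iseqv.trans (S.iseqv.symm hj) hpqr
        have h3 := nextP_gt S hjq (Fin.lt_def.mpr h2)
        exact ⟨lt_of_le_of_lt h1 (Fin.lt_def.mp h3.1), Fin.le_def.mp h3.2⟩
      · have hpj : p.val < j.val := by
          rcases Nat.lt_or_ge p.val j.val with h | h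
          · exact h
          · have hpe : p = j := Fin.ext (le_antisymm h1 h)
            exact absurd (by rw [hpe]; try exact S.iseqv.refl j) hj
        have hbound : ∀ k, S.r j k → p.val < k.val ∧ k.val < q.val := by
          intro k hk
          have hne_p : ¬ (k.val ≤ p.val) := by
            intro hkp
            rcases Nat.lt_or_ge k.val p.val with h | h
            · have h3 : S.r k p := hS k p j q (Fin.lt_def.mpr h) (Fin.lt_def.mpr hpj)
                (Fin.lt_def.mpr h2) (S.iseqv.symm hk) hpqr
              exact hj (S.iseqv.trans (S.iseqv.symm h3) (S.iseqv.symm hk))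
            · have hkq : k = p := Fin.ext (le_antisymm hkp h)
              rw [hkq] at hk
              exact hj (S.iseqv.symm hk)
          have hne_q : ¬ (q.val ≤ k.val) := by
            intro hqk
            rcases Nat.lt_or_ge q.val k.val with h | h
            · have h3 : S.r p j := hS p j q k (Fin.lt_def.mpr hpj) (Fin.lt_def.mpr h2)
                (Fin.lt_def.mpr h) hpqr hk
              exact hj h3
            · have hkq : k = q := Fin.ext (le_antisymm h hqk)
              rw [hkq] at hk
              exact hj (S.iseqv.trans hpqr (S.iseqv.symm hk))
          exact ⟨by omega, by omega⟩
        have h3 := hbound _ (nextP_rel S j)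
        exact ⟨h3.1, le_of_lt h3.2⟩
    · rintro ⟨h1, h2⟩
      by_contra hcon
      have hcase : j.val < p.val ∨ q.val ≤ j.val := by omega
      rcases hcase with hA | hB
      · by_cases hj : S.r p j
        · have h3 := nextP_gt S (S.iseqv.symm hj) (Fin.lt_def.mpr hA)
          have h4 := Fin.le_def.mp h3.2
          omega
        · have hk := nextP_rel S j
          rcases Nat.lt_or_ge (nextP S j).val q.val with h | h
          · have h3 : S.r j p := hS j p (nextP S j) q (Fin.lt_def.mpr hA)
              (Fin.lt_def.mpr h1) (Fin.lt_def.mpr h) hk hpqr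
            exact hj (S.iseqv.symm h3)
          · have hkq : nextP S j = q := Fin.ext (le_antisymm h2 h)
            rw [hkq] at hk
            exact hj (S.iseqv.trans hpqr (S.iseqv.symm hk))
      · by_cases hj : S.r p j
        · by_cases hc : ((blockOf S j).filter (fun l => j < l)).Nonempty
          · obtain ⟨k, hkmem⟩ := hc
            rw [Finset.mem_filter] at hkmem
            have hrk : S.r j k := by simpa [blockOf] using hkmem.1
            have h3 := nextP_gt S hrk hkmem.2
            have h4 := Fin.lt_def.mp h3.1
            omega
          · have h3 := nextP_le_of_empty S hc (S.iseqv.symm hj)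
            have h4 := Fin.le_def.mp h3
            omega
        · have hjq : q.val < j.val := by
            rcases Nat.lt_or_ge q.val j.val with h | h
            · exact h
            · have hje : j = q := Fin.ext (le_antisymm h hB)
              exact absurd (hje ▸ hpqr) hj
          have hk := nextP_rel S j
          rcases Nat.lt_or_ge (nextP S j).val q.val with h | h
          · have h3 : S.r p (nextP S j) := hS p (nextP S j) q j (Fin.lt_def.mpr h1)
              (Fin.lt_def.mpr h) (Fin.lt_def.mpr hjq) hpqr (S.iseqv.symm hk)
            exact hj (S.iseqv.trans h3 (S.iseqv.symm hk))
          · have hkq : nextP S j = q := Fin.ext (le_antisymm h2 h)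
            rw [hkq] at hk
            exact hj (S.iseqv.trans hpqr (S.iseqv.symm hk))
end

section
/- For every n ∈ ℕ, the number of irreducible meandric systems on 2n bridges equals the number of pairs (π, ρ) ∈ NC(n)² such that π ∨ ρ = 1_n and π ∧ ρ = 0_n in the lattice NC(n). -/
open scoped Classical

section Aux
variable {n : ℕ} {S : Setoid (Fin n)}

lemma rel_prevP (i : Fin n) : S.r i (prevP S i) := by
  unfold prevP
  split_ifs with h
  · have := Finset.max'_mem _ h
    rw [Finset.mem_filter] at this
    exact mem_blockOf.mp this.1
  · exact mem_blockOf.mp (Finset.max'_mem _ _)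

lemma rel_nextP (i : Fin n) : S.r i (nextP S i) := by
  unfold nextP
  split_ifs with h
  · have := Finset.min'_mem _ h
    rw [Finset.mem_filter] at this
    exact mem_blockOf.mp this.1
  · exact mem_blockOf.mp (Finset.min'_mem _ _)

lemma prevP_lt_of {i l : Fin n} (h : S.r i l) (hl : l < i) :
    l ≤ prevP S i ∧ prevP S i < i := by
  have hmem : l ∈ (blockOf S i).filter (fun j => j < i) :=
    Finset.mem_filter.mpr ⟨mem_blockOf.mpr h, hl⟩
  have hne : ((blockOf S i).filter (fun j => j < i)).Nonempty := ⟨l, hmem⟩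
  unfold prevP
  rw [dif_pos hne]
  refine ⟨Finset.le_max' _ _ hmem, ?_⟩
  have := Finset.max'_mem _ hne
  rw [Finset.mem_filter] at this
  exact this.2

lemma nextP_gt_of {i l : Fin n} (h : S.r i l) (hl : i < l) :
    i < nextP S i ∧ nextP S i ≤ l := by
  have hmem : l ∈ (blockOf S i).filter (fun j => i < j) :=
    Finset.mem_filter.mpr ⟨mem_blockOf.mpr h, hl⟩
  have hne : ((blockOf S i).filter (fun j => i < j)).Nonempty := ⟨l, hmem⟩
  unfold nextP
  rw [dif_pos hne]
  refine ⟨?_, Finset.min'_le _ _ hmem⟩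
  have := Finset.min'_mem _ hne
  rw [Finset.mem_filter] at this
  exact this.2

lemma prevP_of_min {i : Fin n} (h : ∀ l, S.r i l → i ≤ l) :
    ∀ l, S.r i l → l ≤ prevP S i := by
  have hemp : ¬ ((blockOf S i).filter (fun j => j < i)).Nonempty := by
    rintro ⟨j, hj⟩
    rw [Finset.mem_filter] at hj
    exact absurd (h j (mem_blockOf.mp hj.1)) (not_le.mpr hj.2)
  intro l hl
  unfold prevP
  rw [dif_neg hemp]
  exact Finset.le_max' _ _ (mem_blockOf.mpr hl)

lemma nextP_of_max {i : Fin n} (h : ∀ l, S.r i l → l ≤ i) :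
    ∀ l, S.r i l → nextP S i ≤ l := by
  have hemp : ¬ ((blockOf S i).filter (fun j => i < j)).Nonempty := by
    rintro ⟨j, hj⟩
    rw [Finset.mem_filter] at hj
    exact absurd (h j (mem_blockOf.mp hj.1)) (not_le.mpr hj.2)
  intro l hl
  unfold nextP
  rw [dif_neg hemp]
  exact Finset.min'_le _ _ (mem_blockOf.mpr hl)

end Aux

section Closure
variable {n : ℕ} {S : Setoid (Fin n)}

private lemma descend (F : Set (Fin n)) (hF : ∀ k ∈ F, prevP S k ∈ F) :
    ∀ m : ℕ, ∀ k ∈ F, ∀ l : Fin n, S.r k l → l ≤ k → k.val - l.val ≤ m → l ∈ F := by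
  intro m
  induction m with
  | zero =>
    intro k hk l hrel hle hm
    have : l = k := by
      apply Fin.ext
      have := Fin.le_def.mp hle
      omega
    exact this ▸ hk
  | succ m ih =>
    intro k hk l hrel hle hm
    rcases eq_or_lt_of_le hle with heq | hlt
    · exact heq ▸ hk
    · have hp := prevP_lt_of hrel hlt
      have hpF : prevP S k ∈ F := hF k hk
      have hrel' : S.r (prevP S k) l := S.iseqv.trans (S.iseqv.symm (rel_prevP k)) hrel
      apply ih _ hpF l hrel' hp.1
      have h1 := Fin.lt_def.mp hp.2
      have h2 := Fin.le_def.mp hp.1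
      omega

private lemma ascend (F : Set (Fin n)) (hF : ∀ k ∈ F, nextP S k ∈ F) :
    ∀ m : ℕ, ∀ k ∈ F, ∀ l : Fin n, S.r k l → k ≤ l → l.val - k.val ≤ m → l ∈ F := by
  intro m
  induction m with
  | zero =>
    intro k hk l hrel hle hm
    have : l = k := by
      apply Fin.ext
      have := Fin.le_def.mp hle
      omega
    exact this ▸ hk
  | succ m ih =>
    intro k hk l hrel hle hm
    rcases eq_or_lt_of_le hle with heq | hlt
    · exact heq ▸ hk
    · have hp := nextP_gt_of hrel hlt
      have hpF : nextP S k ∈ F := hF k hk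
      have hrel' : S.r (nextP S k) l := S.iseqv.trans (S.iseqv.symm (rel_nextP k)) hrel
      apply ih _ hpF l hrel' hp.2
      have h1 := Fin.lt_def.mp hp.1
      have h2 := Fin.le_def.mp hp.2
      omega

lemma blockUnion_of_prevP_closed (F : Set (Fin n)) (hF : ∀ k ∈ F, prevP S k ∈ F) :
    ∀ k ∈ F, ∀ l : Fin n, S.r k l → l ∈ F := by
  intro k hk l hrel
  -- the minimum of the block of k
  set mb := (blockOf S k).min' (blockOf_nonempty S k) with hmb
  have hmbrel : S.r k mb := mem_blockOf.mp (Finset.min'_mem _ _)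
  have hmble : mb ≤ k := Finset.min'_le _ _ (mem_blockOf.mpr (S.iseqv.refl k))
  have hmbF : mb ∈ F := descend F hF k.val k hk mb hmbrel hmble (by omega)
  have hmbmin : ∀ x, S.r mb x → mb ≤ x := by
    intro x hx
    exact Finset.min'_le _ _ (mem_blockOf.mpr (S.iseqv.trans hmbrel hx))
  -- prevP of the min is the max of the block
  set Mx := prevP S mb with hMx
  have hMxF : Mx ∈ F := hF mb hmbF
  have hMxrel : S.r mb Mx := rel_prevP mb
  have hrel2 : S.r mb l := S.iseqv.trans (S.iseqv.symm hmbrel) hrel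
  have hlle : l ≤ Mx := prevP_of_min hmbmin l hrel2
  have hrel3 : S.r Mx l := S.iseqv.trans (S.iseqv.symm hMxrel) hrel2
  exact descend F hF Mx.val Mx hMxF l hrel3 hlle (by omega)

lemma blockUnion_of_nextP_closed (F : Set (Fin n)) (hF : ∀ k ∈ F, nextP S k ∈ F) :
    ∀ k ∈ F, ∀ l : Fin n, S.r k l → l ∈ F := by
  intro k hk l hrel
  set mb := (blockOf S k).max' (blockOf_nonempty S k) with hmb
  have hmbrel : S.r k mb := mem_blockOf.mp (Finset.max'_mem _ _)
  have hmble : k ≤ mb := Finset.le_max' _ _ (mem_blockOf.mpr (S.iseqv.refl k))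
  have hmbF : mb ∈ F := ascend F hF mb.val k hk mb hmbrel hmble (by omega)
  have hmbmax : ∀ x, S.r mb x → x ≤ mb := by
    intro x hx
    exact Finset.le_max' _ _ (mem_blockOf.mpr (S.iseqv.trans hmbrel hx))
  set Mx := nextP S mb with hMx
  have hMxF : Mx ∈ F := hF mb hmbF
  have hMxrel : S.r mb Mx := rel_nextP mb
  have hrel2 : S.r mb l := S.iseqv.trans (S.iseqv.symm hmbrel) hrel
  have hlle : Mx ≤ l := nextP_of_max hmbmax l hrel2
  have hrel3 : S.r Mx l := S.iseqv.trans (S.iseqv.symm hMxrel) hrel2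
  exact ascend F hF l.val Mx hMxF l hrel3 hlle (by omega)

end Closure

section MM
variable {n : ℕ} (π ρ : Setoid (Fin n))

lemma meanderMap_dEven (k : Fin n) : meanderMap π ρ (dEven k) = dOdd (prevP π k) := by
  unfold meanderMap dEven
  have h2 : (2 * k.val) % 2 = 0 := by omega
  rw [if_pos h2]
  congr 1
  congr 1
  apply Fin.ext
  show 2 * k.val / 2 = k.val
  omega

lemma meanderMap_dOdd (k : Fin n) : meanderMap π ρ (dOdd k) = dEven (nextP ρ k) := by
  unfold meanderMap dOdd
  have h2 : (2 * k.val + 1) % 2 ≠ 0 := by omega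
  rw [if_neg h2]
  congr 1
  congr 1
  apply Fin.ext
  show (2 * k.val + 1) / 2 = k.val
  omega

end MM

section Side
variable {n : ℕ}

/-- The two-block partition `{P, Pᶜ}` determined by a set `P`. -/
def sideSetoid (P : Set (Fin n)) : Setoid (Fin n) :=
  ⟨fun x y => (x ∈ P ↔ y ∈ P),
   ⟨fun _ => Iff.rfl, fun h => h.symm, fun h1 h2 => h1.trans h2⟩⟩

lemma sideSetoid_isNC (s t : Fin n) : IsNC (sideSetoid {x | s ≤ x ∧ x ≤ t}) := by
  intro a b c d hab hbc hcd rac rbd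
  set P : Set (Fin n) := {x | s ≤ x ∧ x ≤ t} with hP
  show a ∈ P ↔ b ∈ P
  constructor
  · intro ha
    have hc : c ∈ P := rac.mp ha
    exact ⟨le_trans ha.1 (le_of_lt hab), le_trans (le_of_lt hbc) hc.2⟩
  · intro hb
    have hd : d ∈ P := rbd.mp hb
    have hc : c ∈ P := ⟨le_trans hb.1 (le_of_lt hbc), le_trans (le_of_lt hcd) hd.2⟩
    exact rac.mpr hc

lemma ncJoin_ne_top_of_interval {π ρ : Setoid (Fin n)} (s t x0 : Fin n)
    (hst : s ≤ t) (hx0 : ¬ (s ≤ x0 ∧ x0 ≤ t))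
    (hπU : ∀ x : Fin n, (s ≤ x ∧ x ≤ t) → ∀ y, π.r x y → (s ≤ y ∧ y ≤ t))
    (hρU : ∀ x : Fin n, (s ≤ x ∧ x ≤ t) → ∀ y, ρ.r x y → (s ≤ y ∧ y ≤ t)) :
    ncJoin π ρ ≠ ⊤ := by
  set P : Set (Fin n) := {x | s ≤ x ∧ x ≤ t} with hP
  set τ := sideSetoid P with hτ
  have hπle : π ≤ τ := by
    intro x y hxy
    show x ∈ P ↔ y ∈ P
    exact ⟨fun hx => hπU x hx y hxy, fun hy => hπU y hy x (π.iseqv.symm hxy)⟩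
  have hρle : ρ ≤ τ := by
    intro x y hxy
    show x ∈ P ↔ y ∈ P
    exact ⟨fun hx => hρU x hx y hxy, fun hy => hρU y hy x (ρ.iseqv.symm hxy)⟩
  have hmem : τ ∈ {τ | IsNC τ ∧ π ≤ τ ∧ ρ ≤ τ} := ⟨sideSetoid_isNC s t, hπle, hρle⟩
  have hle : ncJoin π ρ ≤ τ := sInf_le hmem
  intro htop
  rw [htop] at hle
  have : τ.r s x0 := hle (by trivial : (⊤ : Setoid (Fin n)).r s x0)
  have hsP : s ∈ P := ⟨le_refl s, hst⟩
  exact hx0 (this.mp hsP)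

end Side

section IntervalArgs
variable {n : ℕ} {π ρ : Setoid (Fin n)}

lemma rel_of_prevP_interval {s t : Fin n} (hst : s ≤ t)
    (hprev : ∀ k : Fin n, s < k → k ≤ t → (s ≤ prevP π k ∧ prevP π k < t)) :
    π.r t s := by
  by_contra hns
  set Bf := (blockOf π t).filter (fun j => s ≤ j ∧ j ≤ t) with hBf
  have hne : Bf.Nonempty := ⟨t, Finset.mem_filter.mpr ⟨mem_blockOf.mpr (π.iseqv.refl t), hst, le_refl t⟩⟩
  set v := Bf.min' hne with hv
  have hvmem := Finset.min'_mem Bf hne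
  rw [Finset.mem_filter] at hvmem
  obtain ⟨hvB, hvs, hvt⟩ := hvmem
  have hvrel : π.r t v := mem_blockOf.mp hvB
  have hvne : v ≠ s := fun h => hns (h ▸ hvrel)
  have hsv : s < v := lt_of_le_of_ne hvs (fun h => hvne h.symm)
  obtain ⟨hps, hpt⟩ := hprev v hsv hvt
  by_cases hex : ∃ l, π.r v l ∧ l < v
  · obtain ⟨l, hl1, hl2⟩ := hex
    have hp := prevP_lt_of hl1 hl2
    have hpmem : prevP π v ∈ Bf := Finset.mem_filter.mpr
      ⟨mem_blockOf.mpr (π.iseqv.trans hvrel (rel_prevP v)), hps, le_of_lt hpt⟩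
    exact absurd (Finset.min'_le Bf _ hpmem) (not_le.mpr hp.2)
  · push_neg at hex
    have hmin : ∀ l, π.r v l → v ≤ l := fun l hl => hex l hl
    have := prevP_of_min hmin t (π.iseqv.symm hvrel)
    exact absurd this (not_le.mpr hpt)

lemma prevP_interval_contra {s t : Fin n} (hst : s ≤ t)
    (hprev : ∀ k : Fin n, s ≤ k → k ≤ t → (s ≤ prevP π k ∧ prevP π k < t)) :
    False := by
  have hrel := rel_of_prevP_interval hst (fun k hk hk' => hprev k (le_of_lt hk) hk')
  obtain ⟨hps, hpt⟩ := hprev s (le_refl s) hst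
  by_cases hex : ∃ l, π.r s l ∧ l < s
  · obtain ⟨l, hl1, hl2⟩ := hex
    have hp := prevP_lt_of hl1 hl2
    exact absurd hps (not_le.mpr hp.2)
  · push_neg at hex
    have hmin : ∀ l, π.r s l → s ≤ l := fun l hl => hex l hl
    have := prevP_of_min hmin t (π.iseqv.symm hrel)
    exact absurd this (not_le.mpr hpt)

lemma rel_of_nextP_interval {s t : Fin n} (hst : s ≤ t)
    (hnext : ∀ k : Fin n, s ≤ k → k < t → (s < nextP ρ k ∧ nextP ρ k ≤ t)) :
    ρ.r s t := by
  by_contra hns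
  set Cf := (blockOf ρ s).filter (fun j => s ≤ j ∧ j ≤ t) with hCf
  have hne : Cf.Nonempty := ⟨s, Finset.mem_filter.mpr ⟨mem_blockOf.mpr (ρ.iseqv.refl s), le_refl s, hst⟩⟩
  set u := Cf.max' hne with hu
  have humem := Finset.max'_mem Cf hne
  rw [Finset.mem_filter] at humem
  obtain ⟨huB, hus, hut⟩ := humem
  have hurel : ρ.r s u := mem_blockOf.mp huB
  have hune : u ≠ t := fun h => hns (h ▸ hurel)
  have hult : u < t := lt_of_le_of_ne hut hune
  obtain ⟨hqs, hqt⟩ := hnext u hus hult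
  by_cases hex : ∃ l, ρ.r u l ∧ u < l
  · obtain ⟨l, hl1, hl2⟩ := hex
    have hq := nextP_gt_of hl1 hl2
    have hqmem : nextP ρ u ∈ Cf := Finset.mem_filter.mpr
      ⟨mem_blockOf.mpr (ρ.iseqv.trans hurel (rel_nextP u)), le_of_lt hqs, hqt⟩
    exact absurd (Finset.le_max' Cf _ hqmem) (not_le.mpr hq.1)
  · push_neg at hex
    have hmax : ∀ l, ρ.r u l → l ≤ u := fun l hl => hex l hl
    have := nextP_of_max hmax s (ρ.iseqv.symm hurel)
    exact absurd this (not_le.mpr hqs)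

lemma nextP_interval_contra {s t : Fin n} (hst : s ≤ t)
    (hnext : ∀ k : Fin n, s ≤ k → k ≤ t → (s < nextP ρ k ∧ nextP ρ k ≤ t)) :
    False := by
  have hrel := rel_of_nextP_interval hst (fun k hk hk' => hnext k hk (le_of_lt hk'))
  obtain ⟨hqs, hqt⟩ := hnext t hst (le_refl t)
  by_cases hex : ∃ l, ρ.r t l ∧ t < l
  · obtain ⟨l, hl1, hl2⟩ := hex
    have hq := nextP_gt_of hl1 hl2
    exact absurd hqt (not_le.mpr hq.1)
  · push_neg at hex
    have hmax : ∀ l, ρ.r t l → l ≤ t := fun l hl => hex l hl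
    have := nextP_of_max hmax s (ρ.iseqv.symm hrel)
    exact absurd this (not_le.mpr hqs)

end IntervalArgs

lemma reducible_forward {n : ℕ} {π ρ : Setoid (Fin n)} (h : Reducible π ρ) :
    ncJoin π ρ ≠ ⊤ ∨ π ⊓ ρ ≠ ⊥ := by
  obtain ⟨a, b, hab, hsize, hinv⟩ := h
  have hn : 0 < n := by have := a.isLt; omega
  have hA := a.isLt
  have hB := b.isLt
  have hab' : a.val ≤ b.val := Fin.le_def.mp hab
  have hEv : ∀ k : Fin n, a.val ≤ 2*k.val → 2*k.val ≤ b.val →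
      (a.val ≤ 2*(prevP π k).val + 1 ∧ 2*(prevP π k).val + 1 ≤ b.val) := by
    intro k h1 h2
    have hx : dEven k ∈ {x | a ≤ x ∧ x ≤ b} :=
      ⟨Fin.le_def.mpr h1, Fin.le_def.mpr h2⟩
    have hmem := hinv _ hx
    rw [meanderMap_dEven] at hmem
    exact ⟨Fin.le_def.mp hmem.1, Fin.le_def.mp hmem.2⟩
  have hOd : ∀ k : Fin n, a.val ≤ 2*k.val + 1 → 2*k.val + 1 ≤ b.val →
      (a.val ≤ 2*(nextP ρ k).val ∧ 2*(nextP ρ k).val ≤ b.val) := by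
    intro k h1 h2
    have hx : dOdd k ∈ {x | a ≤ x ∧ x ≤ b} :=
      ⟨Fin.le_def.mpr h1, Fin.le_def.mpr h2⟩
    have hmem := hinv _ hx
    rw [meanderMap_dOdd] at hmem
    exact ⟨Fin.le_def.mp hmem.1, Fin.le_def.mp hmem.2⟩
  set s : Fin n := ⟨a.val / 2, by omega⟩ with hsdef
  set t : Fin n := ⟨b.val / 2, by omega⟩ with htdef
  have hsval : s.val = a.val / 2 := rfl
  have htval : t.val = b.val / 2 := rfl
  rcases Nat.mod_two_eq_zero_or_one a.val with hA2 | hA2 <;>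
    rcases Nat.mod_two_eq_zero_or_one b.val with hB2 | hB2
  · -- a even, b even : impossible
    exfalso
    have has : a.val = 2 * s.val := by omega
    have hbt : b.val = 2 * t.val := by omega
    refine prevP_interval_contra (π := π) (s := s) (t := t) (Fin.le_def.mpr (by omega)) ?_
    intro k hk1 hk2
    have hk1' := Fin.le_def.mp hk1
    have hk2' := Fin.le_def.mp hk2
    obtain ⟨h1, h2⟩ := hEv k (by omega) (by omega)
    exact ⟨Fin.le_def.mpr (by omega), Fin.lt_def.mpr (by omega)⟩
  · -- a even, b odd : interval block union, join ≠ ⊤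
    left
    have has : a.val = 2 * s.val := by omega
    have hbt : b.val = 2 * t.val + 1 := by omega
    have hst : s ≤ t := Fin.le_def.mpr (by omega)
    set F : Set (Fin n) := {x | s ≤ x ∧ x ≤ t} with hF
    have hFp : ∀ k ∈ F, prevP π k ∈ F := by
      intro k hk
      have hk1 := Fin.le_def.mp hk.1
      have hk2 := Fin.le_def.mp hk.2
      obtain ⟨h1, h2⟩ := hEv k (by omega) (by omega)
      exact ⟨Fin.le_def.mpr (by omega), Fin.le_def.mpr (by omega)⟩
    have hFn : ∀ k ∈ F, nextP ρ k ∈ F := by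
      intro k hk
      have hk1 := Fin.le_def.mp hk.1
      have hk2 := Fin.le_def.mp hk.2
      obtain ⟨h1, h2⟩ := hOd k (by omega) (by omega)
      exact ⟨Fin.le_def.mpr (by omega), Fin.le_def.mpr (by omega)⟩
    have hπU := blockUnion_of_prevP_closed F hFp
    have hρU := blockUnion_of_nextP_closed F hFn
    by_cases hs0 : 0 < s.val
    · refine ncJoin_ne_top_of_interval s t ⟨0, hn⟩ hst ?_ hπU hρU
      rintro ⟨h1, -⟩
      have := Fin.le_def.mp h1
      simp at this
      omega
    · have ht0 : t.val < n - 1 := by omega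
      refine ncJoin_ne_top_of_interval s t ⟨n-1, by omega⟩ hst ?_ hπU hρU
      rintro ⟨-, h2⟩
      have := Fin.le_def.mp h2
      simp at this
      omega
  · -- a odd, b even : meet ≠ ⊥
    right
    have has : a.val = 2 * s.val + 1 := by omega
    have hbt : b.val = 2 * t.val := by omega
    have hst : s < t := Fin.lt_def.mpr (by omega)
    have hπrel : π.r t s := by
      refine rel_of_prevP_interval (le_of_lt hst) ?_
      intro k hk1 hk2
      have hk1' := Fin.lt_def.mp hk1
      have hk2' := Fin.le_def.mp hk2
      obtain ⟨h1, h2⟩ := hEv k (by omega) (by omega)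
      exact ⟨Fin.le_def.mpr (by omega), Fin.lt_def.mpr (by omega)⟩
    have hρrel : ρ.r s t := by
      refine rel_of_nextP_interval (le_of_lt hst) ?_
      intro k hk1 hk2
      have hk1' := Fin.le_def.mp hk1
      have hk2' := Fin.lt_def.mp hk2
      obtain ⟨h1, h2⟩ := hOd k (by omega) (by omega)
      exact ⟨Fin.lt_def.mpr (by omega), Fin.le_def.mpr (by omega)⟩
    intro hbot
    have hrel : (π ⊓ ρ).r s t := ⟨π.iseqv.symm hπrel, hρrel⟩
    rw [hbot] at hrel
    have : s = t := hrel
    rw [this] at hst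
    exact lt_irrefl _ hst
  · -- a odd, b odd : impossible
    exfalso
    have has : a.val = 2 * s.val + 1 := by omega
    have hbt : b.val = 2 * t.val + 1 := by omega
    refine nextP_interval_contra (ρ := ρ) (s := s) (t := t) (Fin.le_def.mpr (by omega)) ?_
    intro k hk1 hk2
    have hk1' := Fin.le_def.mp hk1
    have hk2' := Fin.le_def.mp hk2
    obtain ⟨h1, h2⟩ := hOd k (by omega) (by omega)
    exact ⟨Fin.lt_def.mpr (by omega), Fin.le_def.mpr (by omega)⟩

section Backward
variable {n : ℕ} {π ρ : Setoid (Fin n)}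

lemma block_inside {S : Setoid (Fin n)} (hS : IsNC S) {i j k : Fin n}
    (hij : S.r i j) (hik : i < k) (hkj : k < j) (hki : ¬ S.r k i) :
    ∀ l, S.r k l → i < l ∧ l < j := by
  intro l hl
  constructor
  · rcases lt_or_ge i l with h | h
    · exact h
    · exfalso
      rcases eq_or_lt_of_le h with heq | hlt
      · exact hki (heq ▸ hl)
      · -- l < i < k < j, l ∼ k, i ∼ j ⟹ l ∼ i
        have hli : S.r l i := hS l i k j hlt hik hkj (S.iseqv.symm hl) hij
        exact hki (S.iseqv.trans hl hli)
  · rcases lt_or_ge l j with h | h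
    · exact h
    · exfalso
      rcases eq_or_lt_of_le h with heq | hlt
      · have : S.r k i := S.iseqv.trans (heq ▸ hl : S.r k j) (S.iseqv.symm hij)
        exact hki this
      · -- i < k < j < l, i ∼ j, k ∼ l ⟹ i ∼ k
        have hik' : S.r i k := hS i k j l hik hkj hlt hij hl
        exact hki (S.iseqv.symm hik')

lemma reducible_of_meet (hπ : IsNC π) (hρ : IsNC ρ) (h : π ⊓ ρ ≠ ⊥) :
    Reducible π ρ := by
  have hpair : ∃ x y : Fin n, (π ⊓ ρ).r x y ∧ x ≠ y := by
    by_contra h'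
    push_neg at h'
    apply h
    apply Setoid.ext
    intro x y
    exact ⟨fun hxy => h' x y hxy, fun hxy => hxy ▸ (π ⊓ ρ).iseqv.refl x⟩
  obtain ⟨x, y, hxy, hne⟩ := hpair
  -- wlog i < j
  obtain ⟨i, j, hij, hrelπ, hrelρ⟩ : ∃ i j : Fin n, i < j ∧ π.r i j ∧ ρ.r i j := by
    rcases lt_or_gt_of_ne hne with h' | h'
    · exact ⟨x, y, h', hxy.1, hxy.2⟩
    · exact ⟨y, x, h', π.iseqv.symm hxy.1, ρ.iseqv.symm hxy.2⟩
  have hij' := Fin.lt_def.mp hij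
  have hjn := j.isLt
  have claimP : ∀ k : Fin n, i < k → k ≤ j → i ≤ prevP π k ∧ prevP π k < j := by
    intro k hik hkj
    by_cases hki : π.r k i
    · obtain ⟨h1, h2⟩ := prevP_lt_of hki hik
      exact ⟨h1, lt_of_lt_of_le h2 hkj⟩
    · have hkj' : k < j := lt_of_le_of_ne hkj (fun h => hki (h ▸ π.iseqv.symm hrelπ))
      have := block_inside hπ hrelπ hik hkj' hki (prevP π k) (rel_prevP k)
      exact ⟨le_of_lt this.1, this.2⟩
  have claimQ : ∀ k : Fin n, i ≤ k → k < j → i < nextP ρ k ∧ nextP ρ k ≤ j := by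
    intro k hik hkj
    by_cases hkj' : ρ.r k j
    · obtain ⟨h1, h2⟩ := nextP_gt_of hkj' hkj
      exact ⟨lt_of_le_of_lt hik h1, h2⟩
    · have hik' : i < k := lt_of_le_of_ne hik (fun h => hkj' (h ▸ hrelρ))
      have hki : ¬ ρ.r k i := fun h => hkj' (ρ.iseqv.trans h hrelρ)
      have := block_inside hρ hrelρ hik' hkj hki (nextP ρ k) (rel_nextP k)
      exact ⟨this.1, le_of_lt this.2⟩
  refine ⟨dOdd i, dEven j, Fin.le_def.mpr (by show 2*i.val+1 ≤ 2*j.val; omega),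
    (by show 2*j.val - (2*i.val+1) < 2*n - 1; omega), ?_⟩
  intro z hz
  have hz1 : 2*i.val+1 ≤ z.val := Fin.le_def.mp hz.1
  have hz2 : z.val ≤ 2*j.val := Fin.le_def.mp hz.2
  rcases Nat.mod_two_eq_zero_or_one z.val with hz2' | hz2'
  · set k : Fin n := ⟨z.val / 2, by have := z.isLt; omega⟩ with hk
    have hzk : z = dEven k := Fin.ext (by show z.val = 2*(z.val/2); omega)
    rw [hzk, meanderMap_dEven]
    obtain ⟨h1, h2⟩ := claimP k (Fin.lt_def.mpr (by show i.val < z.val/2; omega))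
      (Fin.le_def.mpr (by show z.val/2 ≤ j.val; omega))
    have h1' := Fin.le_def.mp h1
    have h2' := Fin.lt_def.mp h2
    exact ⟨Fin.le_def.mpr (by show 2*i.val+1 ≤ 2*(prevP π k).val+1; omega),
      Fin.le_def.mpr (by show 2*(prevP π k).val+1 ≤ 2*j.val; omega)⟩
  · set k : Fin n := ⟨z.val / 2, by have := z.isLt; omega⟩ with hk
    have hzk : z = dOdd k := Fin.ext (by show z.val = 2*(z.val/2)+1; omega)
    rw [hzk, meanderMap_dOdd]
    obtain ⟨h1, h2⟩ := claimQ k (Fin.le_def.mpr (by show i.val ≤ z.val/2; omega))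
      (Fin.lt_def.mpr (by show z.val/2 < j.val; omega))
    have h1' := Fin.lt_def.mp h1
    have h2' := Fin.le_def.mp h2
    exact ⟨Fin.le_def.mpr (by show 2*i.val+1 ≤ 2*(nextP ρ k).val; omega),
      Fin.le_def.mpr (by show 2*(nextP ρ k).val ≤ 2*j.val; omega)⟩

end Backward

lemma reducible_of_join {n : ℕ} {π ρ : Setoid (Fin n)} (h : ncJoin π ρ ≠ ⊤) :
    Reducible π ρ := by
  have hτ : ∃ τ : Setoid (Fin n), IsNC τ ∧ π ≤ τ ∧ ρ ≤ τ ∧ τ ≠ ⊤ := by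
    by_contra h'
    push_neg at h'
    apply h
    refine le_antisymm le_top (le_sInf ?_)
    intro τ hτ
    exact ge_of_eq (h' τ hτ.1 hτ.2.1 hτ.2.2)
  obtain ⟨τ, hτNC, hπle, hρle, hτne⟩ := hτ
  have hpair : ∃ x y : Fin n, ¬ τ.r x y := by
    by_contra h'
    push_neg at h'
    exact hτne (Setoid.ext fun x y => ⟨fun _ => trivial, fun _ => h' x y⟩)
  obtain ⟨x, y, hxy⟩ := hpair
  -- block of minimal diameter
  set D : Fin n → ℕ := fun i =>
    ((blockOf τ i).max' (blockOf_nonempty τ i)).val -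
    ((blockOf τ i).min' (blockOf_nonempty τ i)).val with hD
  obtain ⟨i0, -, hmin⟩ := Finset.exists_min_image Finset.univ D ⟨x, Finset.mem_univ x⟩
  set s := (blockOf τ i0).min' (blockOf_nonempty τ i0) with hsdef
  set t := (blockOf τ i0).max' (blockOf_nonempty τ i0) with htdef
  have hs : τ.r i0 s := mem_blockOf.mp (Finset.min'_mem _ _)
  have ht : τ.r i0 t := mem_blockOf.mp (Finset.max'_mem _ _)
  have hst : s ≤ t := Finset.min'_le _ _ (Finset.max'_mem _ _)
  have hint : ∀ k : Fin n, s ≤ k → k ≤ t → τ.r i0 k := by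
    intro k hsk hkt
    by_contra hk
    have hks : k ≠ s := fun h => hk (h ▸ hs)
    have hkt' : k ≠ t := fun h => hk (h ▸ ht)
    have hsk' : s < k := lt_of_le_of_ne hsk (Ne.symm hks)
    have hkt'' : k < t := lt_of_le_of_ne hkt hkt'
    have hst' : τ.r s t := τ.iseqv.trans (τ.iseqv.symm hs) ht
    set s' := (blockOf τ k).min' (blockOf_nonempty τ k) with hs'def
    set t' := (blockOf τ k).max' (blockOf_nonempty τ k) with ht'def
    have hks'' : τ.r k s' := mem_blockOf.mp (Finset.min'_mem _ _)
    have hkt''' : τ.r k t' := mem_blockOf.mp (Finset.max'_mem _ _)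
    have hs't' : s' ≤ t' := Finset.min'_le _ _ (Finset.max'_mem _ _)
    have hss' : s < s' := by
      rcases lt_or_ge s s' with h' | h'
      · exact h'
      · exfalso
        rcases eq_or_lt_of_le h' with heq | hlt
        · exact hk (τ.iseqv.trans hs (τ.iseqv.symm (heq ▸ hks'' : τ.r k s)))
        · have : τ.r s' s := hτNC s' s k t hlt hsk' hkt'' (τ.iseqv.symm hks'') hst'
          have : τ.r k s := τ.iseqv.trans hks'' this
          exact hk (τ.iseqv.trans hs (τ.iseqv.symm this))
    have htt' : t' < t := by
      rcases lt_or_ge t' t with h' | h'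
      · exact h'
      · exfalso
        rcases eq_or_lt_of_le h' with heq | hlt
        · exact hk (τ.iseqv.trans ht (τ.iseqv.symm (heq.symm ▸ hkt''' : τ.r k t)))
        · have : τ.r s k := hτNC s k t t' hsk' hkt'' hlt hst' hkt'''
          exact hk (τ.iseqv.trans hs this)
    have hDk : D k < D i0 := by
      have h1 := Fin.lt_def.mp hss'
      have h2 := Fin.lt_def.mp htt'
      have h3 := Fin.le_def.mp hs't'
      have h4 := Fin.le_def.mp hst
      show t'.val - s'.val < t.val - s.val
      omega
    exact absurd (hmin k (Finset.mem_univ k)) (not_le.mpr hDk)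
  have hbound : ∀ k : Fin n, τ.r i0 k → s ≤ k ∧ k ≤ t :=
    fun k hk => ⟨Finset.min'_le _ _ (mem_blockOf.mpr hk), Finset.le_max' _ _ (mem_blockOf.mpr hk)⟩
  obtain ⟨x0, hx0⟩ : ∃ x0 : Fin n, ¬ (s ≤ x0 ∧ x0 ≤ t) := by
    by_contra h'
    push_neg at h'
    have hx := h' x
    have hy := h' y
    exact hxy (τ.iseqv.trans (τ.iseqv.symm (hint x hx.1 hx.2)) (hint y hy.1 hy.2))
  have hπU : ∀ z : Fin n, (s ≤ z ∧ z ≤ t) → ∀ w, π.r z w → (s ≤ w ∧ w ≤ t) := by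
    intro z hz w hzw
    exact hbound w (τ.iseqv.trans (hint z hz.1 hz.2) (hπle hzw))
  have hρU : ∀ z : Fin n, (s ≤ z ∧ z ≤ t) → ∀ w, ρ.r z w → (s ≤ w ∧ w ≤ t) := by
    intro z hz w hzw
    exact hbound w (τ.iseqv.trans (hint z hz.1 hz.2) (hρle hzw))
  have hx0' : x0.val < s.val ∨ t.val < x0.val := by
    rcases not_and_or.mp hx0 with h' | h'
    · exact Or.inl (Fin.lt_def.mp (not_le.mp h'))
    · exact Or.inr (Fin.lt_def.mp (not_le.mp h'))
  have hx0lt := x0.isLt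
  have htlt := t.isLt
  have hst' := Fin.le_def.mp hst
  refine ⟨dEven s, dOdd t, Fin.le_def.mpr (by show 2*s.val ≤ 2*t.val+1; omega),
    (by show (2*t.val+1) - 2*s.val < 2*n - 1; omega), ?_⟩
  intro z hz
  have hz1 : 2*s.val ≤ z.val := Fin.le_def.mp hz.1
  have hz2 : z.val ≤ 2*t.val+1 := Fin.le_def.mp hz.2
  rcases Nat.mod_two_eq_zero_or_one z.val with hz2' | hz2'
  · set k : Fin n := ⟨z.val / 2, by have := z.isLt; omega⟩ with hk
    have hzk : z = dEven k := Fin.ext (by show z.val = 2*(z.val/2); omega)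
    rw [hzk, meanderMap_dEven]
    obtain ⟨h1, h2⟩ := hπU k ⟨Fin.le_def.mpr (by show s.val ≤ z.val/2; omega),
      Fin.le_def.mpr (by show z.val/2 ≤ t.val; omega)⟩ (prevP π k) (rel_prevP k)
    have h1' := Fin.le_def.mp h1
    have h2' := Fin.le_def.mp h2
    exact ⟨Fin.le_def.mpr (by show 2*s.val ≤ 2*(prevP π k).val+1; omega),
      Fin.le_def.mpr (by show 2*(prevP π k).val+1 ≤ 2*t.val+1; omega)⟩
  · set k : Fin n := ⟨z.val / 2, by have := z.isLt; omega⟩ with hk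
    have hzk : z = dOdd k := Fin.ext (by show z.val = 2*(z.val/2)+1; omega)
    rw [hzk, meanderMap_dOdd]
    obtain ⟨h1, h2⟩ := hρU k ⟨Fin.le_def.mpr (by show s.val ≤ z.val/2; omega),
      Fin.le_def.mpr (by show z.val/2 ≤ t.val; omega)⟩ (nextP ρ k) (rel_nextP k)
    have h1' := Fin.le_def.mp h1
    have h2' := Fin.le_def.mp h2
    exact ⟨Fin.le_def.mpr (by show 2*s.val ≤ 2*(nextP ρ k).val; omega),
      Fin.le_def.mpr (by show 2*(nextP ρ k).val ≤ 2*t.val+1; omega)⟩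

lemma main_iff {n : ℕ} {π ρ : Setoid (Fin n)} (hπ : IsNC π) (hρ : IsNC ρ) :
    ¬ Reducible π ρ ↔ (ncJoin π ρ = ⊤ ∧ π ⊓ ρ = ⊥) := by
  constructor
  · intro hnr
    by_contra hc
    rcases not_and_or.mp hc with h' | h'
    · exact hnr (reducible_of_join h')
    · exact hnr (reducible_of_meet hπ hρ h')
  · rintro ⟨h1, h2⟩ hr
    rcases reducible_forward hr with h' | h'
    · exact h' h1
    · exact h' h2

/-- The number of irreducible meandric systems on `2n` bridges equals the number
of pairs `(π,ρ) ∈ NC(n)²` with `π ∨ ρ = 1_n` and `π ∧ ρ = 0_n`. -/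
theorem card_irreducible_meandric_systems (n : ℕ) :
    Nat.card {pr : Setoid (Fin n) × Setoid (Fin n) //
        IsNC pr.1 ∧ IsNC pr.2 ∧ ¬ Reducible pr.1 pr.2}
      = Nat.card {pr : Setoid (Fin n) × Setoid (Fin n) //
        IsNC pr.1 ∧ IsNC pr.2 ∧ ncJoin pr.1 pr.2 = ⊤ ∧ pr.1 ⊓ pr.2 = ⊥} :=
  Nat.card_congr (Equiv.subtypeEquivRight fun pr => by
    constructor
    · rintro ⟨h1, h2, h3⟩
      obtain ⟨hj, hm⟩ := (main_iff h1 h2).mp h3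
      exact ⟨h1, h2, hj, hm⟩
    · rintro ⟨h1, h2, h3, h4⟩
      exact ⟨h1, h2, (main_iff h1 h2).mpr ⟨h3, h4⟩⟩)
end
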